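/- arXiv:math/0507004 — 4 statements merged into one kernel-verified Lean document; each statement's English description precedes it below -/
import Mathlib

section
/- If A and B are convex subsets of hyperbolic space ℍⁿ with A ∩ B nonempty, then the convex hull of A ∪ B is contained in the Δ-neighborhood of A ∪ B, where Δ = log((3+√5)/2) is the thin-triangles constant of ℍ². -/
noncomputable section

/-- The upper half-space model of real hyperbolic `(n+1)`-space `ℍⁿ⁺¹`:
points of `ℝⁿ × ℝ` with positive last coordinate. -/
abbrev Hyp (n : ℕ) := {p : EuclideanSpace ℝ (Fin n) × ℝ // 0 < p.2}

/-- Inverse hyperbolic cosine. -/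
def arcoshR (x : ℝ) : ℝ := Real.log (x + Real.sqrt (x ^ 2 - 1))

/-- The hyperbolic distance in the upper half-space model. -/
def hdist {n : ℕ} (p q : Hyp n) : ℝ :=
  arcoshR (1 + (dist p.1.1 q.1.1 ^ 2 + (p.1.2 - q.1.2) ^ 2) / (2 * p.1.2 * q.1.2))

/-- `s` is a geodesic segment from `a` to `b` with respect to the distance function `d`:
the image of an arclength parametrization realizing `d`. -/
def IsSeg {X : Type*} (d : X → X → ℝ) (s : Set X) (a b : X) : Prop :=
  ∃ γ : ℝ → X, γ 0 = a ∧ γ (d a b) = b ∧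
    (∀ u ∈ Set.Icc (0:ℝ) (d a b), ∀ v ∈ Set.Icc (0:ℝ) (d a b), d (γ u) (γ v) = |u - v|) ∧
    s = γ '' Set.Icc (0:ℝ) (d a b)

/-- A set is convex (wrt the distance `d`) if any two of its points are joined by a
geodesic segment inside the set. -/
def DConvex {X : Type*} (d : X → X → ℝ) (A : Set X) : Prop :=
  ∀ a ∈ A, ∀ b ∈ A, ∃ s, IsSeg d s a b ∧ s ⊆ A

/-- The convex hull: the smallest convex set containing `A`. -/
def dConvexHull {X : Type*} (d : X → X → ℝ) (A : Set X) : Set X :=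
  ⋂₀ {C | A ⊆ C ∧ DConvex d C}

/-- The thin-triangles constant of the hyperbolic plane. -/
def thinDelta : ℝ := Real.log ((3 + Real.sqrt 5) / 2)

namespace HypAux

open Real Set

/-! ### arcoshR basics -/

lemma cosh_arcoshR {u : ℝ} (hu : 1 ≤ u) : Real.cosh (arcoshR u) = u := by
  have h1 : (0:ℝ) ≤ u ^ 2 - 1 := by nlinarith
  have hs : Real.sqrt (u ^ 2 - 1) ^ 2 = u ^ 2 - 1 := Real.sq_sqrt h1
  have hsn : 0 ≤ Real.sqrt (u ^ 2 - 1) := Real.sqrt_nonneg _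
  have hv : 0 < u + Real.sqrt (u ^ 2 - 1) := by nlinarith
  have hinv : (u + Real.sqrt (u ^ 2 - 1))⁻¹ = u - Real.sqrt (u ^ 2 - 1) := by
    apply inv_eq_of_mul_eq_one_right
    nlinarith
  rw [arcoshR, Real.cosh_eq, Real.exp_log hv, Real.exp_neg, Real.exp_log hv, hinv]
  ring

lemma sinh_arcoshR {u : ℝ} (hu : 1 ≤ u) : Real.sinh (arcoshR u) = Real.sqrt (u ^ 2 - 1) := by
  have h1 : (0:ℝ) ≤ u ^ 2 - 1 := by nlinarith
  have hs : Real.sqrt (u ^ 2 - 1) ^ 2 = u ^ 2 - 1 := Real.sq_sqrt h1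
  have hsn : 0 ≤ Real.sqrt (u ^ 2 - 1) := Real.sqrt_nonneg _
  have hv : 0 < u + Real.sqrt (u ^ 2 - 1) := by nlinarith
  have hinv : (u + Real.sqrt (u ^ 2 - 1))⁻¹ = u - Real.sqrt (u ^ 2 - 1) := by
    apply inv_eq_of_mul_eq_one_right
    nlinarith
  rw [arcoshR, Real.sinh_eq, Real.exp_log hv, Real.exp_neg, Real.exp_log hv, hinv]
  ring

lemma arcoshR_cosh {t : ℝ} (ht : 0 ≤ t) : arcoshR (Real.cosh t) = t := by
  have h1 : Real.cosh t ^ 2 - 1 = Real.sinh t ^ 2 := by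
    have := Real.cosh_sq t; linarith
  have h2 : Real.sqrt (Real.cosh t ^ 2 - 1) = Real.sinh t := by
    rw [h1]; exact Real.sqrt_sq (Real.sinh_nonneg_iff.2 ht)
  rw [arcoshR, h2, Real.cosh_add_sinh, Real.log_exp]

lemma arcoshR_nonneg {u : ℝ} (hu : 1 ≤ u) : 0 ≤ arcoshR u := by
  rw [arcoshR]
  have hsn : 0 ≤ Real.sqrt (u ^ 2 - 1) := Real.sqrt_nonneg _
  have : (1:ℝ) ≤ u + Real.sqrt (u ^ 2 - 1) := by linarith
  exact Real.log_nonneg this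

lemma arcoshR_pos {u : ℝ} (hu : 1 < u) : 0 < arcoshR u := by
  rw [arcoshR]
  have hsn : 0 ≤ Real.sqrt (u ^ 2 - 1) := Real.sqrt_nonneg _
  exact Real.log_pos (by linarith)

lemma arcoshR_le_arcoshR {u v : ℝ} (hu : 1 ≤ u) (huv : u ≤ v) : arcoshR u ≤ arcoshR v := by
  rw [arcoshR, arcoshR]
  have hsn : 0 ≤ Real.sqrt (u ^ 2 - 1) := Real.sqrt_nonneg _
  have hmono : Real.sqrt (u ^ 2 - 1) ≤ Real.sqrt (v ^ 2 - 1) := by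
    apply Real.sqrt_le_sqrt; nlinarith
  apply Real.log_le_log (by linarith)
  linarith

lemma thinDelta_eq : thinDelta = arcoshR (3 / 2) := by
  have h5 : Real.sqrt ((3/2:ℝ) ^ 2 - 1) = Real.sqrt 5 / 2 := by
    rw [show ((3/2:ℝ) ^ 2 - 1) = (Real.sqrt 5 / 2) ^ 2 by
      have h : Real.sqrt 5 ^ 2 = 5 := Real.sq_sqrt (by norm_num)
      linear_combination (-1/4 : ℝ) * h]
    exact Real.sqrt_sq (by positivity)
  rw [thinDelta, arcoshR, h5]
  ring_nf


/-! ### The cosh-distance expression and the Minkowski model -/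

variable {n : ℕ}

def E (p q : Hyp n) : ℝ :=
  1 + (dist p.1.1 q.1.1 ^ 2 + (p.1.2 - q.1.2) ^ 2) / (2 * p.1.2 * q.1.2)

lemma hdist_eq (p q : Hyp n) : hdist p q = arcoshR (E p q) := rfl

lemma one_le_E (p q : Hyp n) : 1 ≤ E p q := by
  have h1 : 0 ≤ dist p.1.1 q.1.1 ^ 2 + (p.1.2 - q.1.2) ^ 2 := by positivity
  have h2 : 0 < 2 * p.1.2 * q.1.2 := by have := p.2; have := q.2; positivity
  have := div_nonneg h1 h2.le
  simp only [E]; linarith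

lemma E_self (p : Hyp n) : E p p = 1 := by
  simp [E]

lemma eq_of_E_eq_one {p q : Hyp n} (h : E p q = 1) : p = q := by
  have h2 : 0 < 2 * p.1.2 * q.1.2 := by have := p.2; have := q.2; positivity
  have h3 : dist p.1.1 q.1.1 ^ 2 + (p.1.2 - q.1.2) ^ 2 = 0 := by
    have : (dist p.1.1 q.1.1 ^ 2 + (p.1.2 - q.1.2) ^ 2) / (2 * p.1.2 * q.1.2) = 0 := by
      simp only [E] at h; linarith
    exact (div_eq_zero_iff.1 this).resolve_right h2.ne'
  have hd : dist p.1.1 q.1.1 = 0 := by nlinarith [sq_nonneg (dist p.1.1 q.1.1), sq_nonneg (p.1.2 - q.1.2), dist_nonneg (x := p.1.1) (y := q.1.1)]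
  have hy : p.1.2 = q.1.2 := by nlinarith [sq_nonneg (p.1.2 - q.1.2)]
  apply Subtype.ext
  exact Prod.ext (by rwa [dist_eq_zero] at hd) hy

lemma one_lt_E_of_ne {p q : Hyp n} (h : p ≠ q) : 1 < E p q :=
  lt_of_le_of_ne (one_le_E p q) (fun he => h (eq_of_E_eq_one he.symm))

/-- Minkowski space model vectors. -/
abbrev M (n : ℕ) := EuclideanSpace ℝ (Fin n) × ℝ × ℝ

/-- The Minkowski bilinear form (last coordinate timelike). -/
def mdot (v w : M n) : ℝ := (inner ℝ v.1 w.1 : ℝ) + v.2.1 * w.2.1 - v.2.2 * w.2.2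

lemma mdot_comm (v w : M n) : mdot v w = mdot w v := by
  unfold mdot; rw [real_inner_comm]; ring

@[simp] lemma mdot_add_left (u v w : M n) : mdot (u + v) w = mdot u w + mdot v w := by
  simp [mdot, inner_add_left]; ring

@[simp] lemma mdot_add_right (u v w : M n) : mdot u (v + w) = mdot u v + mdot u w := by
  simp [mdot, inner_add_right]; ring

@[simp] lemma mdot_sub_left (u v w : M n) : mdot (u - v) w = mdot u w - mdot v w := by
  simp [mdot, inner_sub_left]; ring

@[simp] lemma mdot_sub_right (u v w : M n) : mdot u (v - w) = mdot u v - mdot u w := by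
  simp [mdot, inner_sub_right]; ring

@[simp] lemma mdot_smul_left (r : ℝ) (v w : M n) : mdot (r • v) w = r * mdot v w := by
  simp only [mdot, Prod.smul_fst, Prod.smul_snd, real_inner_smul_left, smul_eq_mul]; ring

@[simp] lemma mdot_smul_right (r : ℝ) (v w : M n) : mdot v (r • w) = r * mdot v w := by
  simp only [mdot, Prod.smul_fst, Prod.smul_snd, real_inner_smul_right, smul_eq_mul]; ring

/-- Embedding of the upper half-space into the hyperboloid. -/
def phi (p : Hyp n) : M n :=
  (p.1.2⁻¹ • p.1.1,
   (‖p.1.1‖ ^ 2 + p.1.2 ^ 2 - 1) / (2 * p.1.2),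
   (‖p.1.1‖ ^ 2 + p.1.2 ^ 2 + 1) / (2 * p.1.2))

lemma mdot_phi_phi (p q : Hyp n) : mdot (phi p) (phi q) = -(E p q) := by
  have hp := p.2
  have hq := q.2
  simp only [mdot, phi, E, real_inner_smul_left, real_inner_smul_right, dist_eq_norm,
    norm_sub_sq_real]
  field_simp
  ring

lemma mdot_phi_self (p : Hyp n) : mdot (phi p) (phi p) = -1 := by
  rw [mdot_phi_phi, E_self]

lemma phi_t_pos (p : Hyp n) : 0 < (phi p).2.2 := by
  have hp := p.2
  have : 0 ≤ ‖p.1.1‖ ^ 2 := by positivity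
  apply div_pos (by nlinarith) (by linarith)

lemma phi_f_eq (p : Hyp n) : (phi p).2.2 - (phi p).2.1 = (p.1.2)⁻¹ := by
  have hp := p.2
  simp only [phi]
  field_simp
  norm_num

lemma phi_inj {p q : Hyp n} (h : phi p = phi q) : p = q := by
  apply eq_of_E_eq_one
  have := mdot_phi_phi p q
  rw [h, mdot_phi_self] at this
  linarith


/-! ### Positivity on the orthocomplement of a hyperboloid point -/

lemma mdot_orth_nonneg {o : Hyp n} {Y : M n} (h : mdot Y (phi o) = 0) :
    0 ≤ mdot Y Y ∧ (mdot Y Y = 0 → Y = 0) := by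
  set T := phi o with hT
  have hTT : mdot T T = -1 := mdot_phi_self o
  have htt : 0 < T.2.2 := phi_t_pos o
  set a : ℝ := inner ℝ Y.1 T.1 with ha
  have h1 : |a| ≤ ‖Y.1‖ * ‖T.1‖ := abs_real_inner_le_norm _ _
  have hTTc : ‖T.1‖ ^ 2 + T.2.1 ^ 2 = T.2.2 ^ 2 - 1 := by
    have hin : (inner ℝ T.1 T.1 : ℝ) = ‖T.1‖ ^ 2 := real_inner_self_eq_norm_sq T.1
    simp only [mdot, hin] at hTT; nlinarith
  have horth : a + Y.2.1 * T.2.1 = Y.2.2 * T.2.2 := by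
    simp only [mdot, ← ha] at h; linarith
  have habs : |a + Y.2.1 * T.2.1| ≤ ‖Y.1‖ * ‖T.1‖ + |Y.2.1| * |T.2.1| := by
    calc |a + Y.2.1 * T.2.1| ≤ |a| + |Y.2.1 * T.2.1| := abs_add_le _ _
      _ ≤ ‖Y.1‖ * ‖T.1‖ + |Y.2.1| * |T.2.1| := by rw [abs_mul]; linarith
  have hCS2 : (a + Y.2.1 * T.2.1) ^ 2 ≤ (‖Y.1‖ ^ 2 + Y.2.1 ^ 2) * (‖T.1‖ ^ 2 + T.2.1 ^ 2) := by
    nlinarith [habs, abs_nonneg (a + Y.2.1 * T.2.1), sq_abs (a + Y.2.1 * T.2.1),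
      sq_abs Y.2.1, sq_abs T.2.1, sq_nonneg (‖Y.1‖ * |T.2.1| - |Y.2.1| * ‖T.1‖),
      norm_nonneg Y.1, norm_nonneg T.1, abs_nonneg Y.2.1, abs_nonneg T.2.1,
      mul_nonneg (mul_nonneg (norm_nonneg Y.1) (norm_nonneg T.1)) (mul_nonneg (abs_nonneg Y.2.1) (abs_nonneg T.2.1))]
  have hYY : mdot Y Y = ‖Y.1‖ ^ 2 + Y.2.1 ^ 2 - Y.2.2 ^ 2 := by
    simp only [mdot, real_inner_self_eq_norm_sq]; ring
  have h3 : Y.2.2 ^ 2 * T.2.2 ^ 2 ≤ (‖Y.1‖ ^ 2 + Y.2.1 ^ 2) * (T.2.2 ^ 2 - 1) := by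
    calc Y.2.2 ^ 2 * T.2.2 ^ 2 = (a + Y.2.1 * T.2.1) ^ 2 := by
          linear_combination (Y.2.2 * T.2.2 + (a + Y.2.1 * T.2.1)) * horth.symm
      _ ≤ (‖Y.1‖ ^ 2 + Y.2.1 ^ 2) * (‖T.1‖ ^ 2 + T.2.1 ^ 2) := hCS2
      _ = (‖Y.1‖ ^ 2 + Y.2.1 ^ 2) * (T.2.2 ^ 2 - 1) := by rw [hTTc]
  have h5 : mdot Y Y * T.2.2 ^ 2 = (‖Y.1‖ ^ 2 + Y.2.1 ^ 2) * T.2.2 ^ 2 - Y.2.2 ^ 2 * T.2.2 ^ 2 := by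
    rw [hYY]; ring
  have hnn : 0 ≤ ‖Y.1‖ ^ 2 + Y.2.1 ^ 2 := by positivity
  have hT2 : 0 < T.2.2 ^ 2 := by positivity
  have hkey : ‖Y.1‖ ^ 2 + Y.2.1 ^ 2 ≤ mdot Y Y * T.2.2 ^ 2 := by linarith
  constructor
  · nlinarith [hkey, hnn, hT2]
  · intro h0
    rw [h0, zero_mul] at hkey
    have hs1 : ‖Y.1‖ ^ 2 ≤ 0 := by linarith [sq_nonneg Y.2.1]
    have hz1 : ‖Y.1‖ = 0 := sq_eq_zero_iff.1 (le_antisymm hs1 (sq_nonneg _))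
    have hz2 : Y.2.1 = 0 := by
      have hs2 : Y.2.1 ^ 2 ≤ 0 := by linarith [sq_nonneg ‖Y.1‖]
      exact sq_eq_zero_iff.1 (le_antisymm hs2 (sq_nonneg _))
    have ha0 : a = 0 := by
      rw [ha, show Y.1 = 0 from norm_eq_zero.1 hz1, inner_zero_left]
    have hz3 : Y.2.2 = 0 := by
      rw [ha0, hz2, zero_mul, add_zero] at horth
      exact (mul_eq_zero.1 horth.symm).resolve_right htt.ne'
    exact Prod.ext (norm_eq_zero.1 hz1) (Prod.ext hz2 hz3)

/-! ### Inverse of phi and geodesics -/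

def psi (W : M n) (hf : 0 < W.2.2 - W.2.1) : Hyp n :=
  ⟨((W.2.2 - W.2.1)⁻¹ • W.1, (W.2.2 - W.2.1)⁻¹), inv_pos.2 hf⟩

lemma phi_psi (W : M n) (hW : mdot W W = -1) (hf : 0 < W.2.2 - W.2.1) :
    phi (psi W hf) = W := by
  set f := W.2.2 - W.2.1 with hfd
  have hf0 : f ≠ 0 := hf.ne'
  have hWc : ‖W.1‖ ^ 2 + 1 = f * (W.2.2 + W.2.1) := by
    have : (inner ℝ W.1 W.1 : ℝ) = ‖W.1‖ ^ 2 := real_inner_self_eq_norm_sq W.1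
    simp only [mdot, this] at hW; rw [hfd]; nlinarith
  have hnorm : ‖f⁻¹ • W.1‖ ^ 2 = f⁻¹ ^ 2 * ‖W.1‖ ^ 2 := by
    rw [norm_smul, Real.norm_eq_abs, mul_pow, sq_abs]
  simp only [phi, psi, hnorm]
  refine Prod.ext ?_ (Prod.ext ?_ ?_)
  · simp only [smul_smul]
    rw [inv_inv, mul_inv_cancel₀ hf0, one_smul]
  · have h2f : (0:ℝ) < 2 * f⁻¹ := by positivity
    have hff : f * f⁻¹ = 1 := mul_inv_cancel₀ hf0
    show (‖f⁻¹ • W.1‖ ^ 2 + f⁻¹ ^ 2 - 1) / (2 * f⁻¹) = W.2.1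
    rw [hnorm, div_eq_iff h2f.ne']
    linear_combination f⁻¹ ^ 2 * hWc + (f⁻¹ * (W.2.2 + W.2.1) + 1) * hff - f⁻¹ * hfd
  · have h2f : (0:ℝ) < 2 * f⁻¹ := by positivity
    have hff : f * f⁻¹ = 1 := mul_inv_cancel₀ hf0
    show (‖f⁻¹ • W.1‖ ^ 2 + f⁻¹ ^ 2 + 1) / (2 * f⁻¹) = W.2.2
    rw [hnorm, div_eq_iff h2f.ne']
    linear_combination f⁻¹ ^ 2 * hWc + (f⁻¹ * (W.2.2 + W.2.1) - 1) * hff + f⁻¹ * hfd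


/-! ### Exponential combinations -/

lemma exp_comb_nonpos {A B L t : ℝ} (ht0 : 0 ≤ t) (htL : t ≤ L)
    (h0 : A + B ≤ 0) (hL : A * Real.exp L + B * Real.exp (-L) ≤ 0) :
    A * Real.exp t + B * Real.exp (-t) ≤ 0 := by
  have hz : 0 < Real.exp t := Real.exp_pos t
  have hzL : 0 < Real.exp L := Real.exp_pos L
  have hz1 : 1 ≤ Real.exp t := Real.one_le_exp ht0
  have hzle : Real.exp t ≤ Real.exp L := Real.exp_le_exp.2 htL
  rw [Real.exp_neg] at hL
  have hexp : A * Real.exp L ^ 2 + B = (A * Real.exp L + B * (Real.exp L)⁻¹) * Real.exp L := by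
    field_simp
  have hL2 : A * Real.exp L ^ 2 + B ≤ 0 := by
    rw [hexp]; exact mul_nonpos_iff.2 (Or.inr ⟨hL, hzL.le⟩)
  have h1t : (1:ℝ) ≤ Real.exp t ^ 2 := by nlinarith
  have h2t : Real.exp t ^ 2 ≤ Real.exp L ^ 2 := by nlinarith
  have ht2 : A * Real.exp t ^ 2 + B ≤ 0 := by
    rcases le_or_gt 0 A with hA | hA
    · have := mul_le_mul_of_nonneg_left h2t hA
      linarith
    · have := mul_le_mul_of_nonpos_left h1t hA.le
      linarith
  rw [Real.exp_neg]
  have : A * Real.exp t + B * (Real.exp t)⁻¹ = (A * Real.exp t ^ 2 + B) / Real.exp t := by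
    field_simp
  rw [this]
  exact div_nonpos_of_nonpos_of_nonneg ht2 hz.le

lemma exp_comb_pos {A B L t : ℝ} (ht0 : 0 ≤ t) (htL : t ≤ L)
    (h0 : 0 < A + B) (hL : 0 < A * Real.exp L + B * Real.exp (-L)) :
    0 < A * Real.exp t + B * Real.exp (-t) := by
  have hz : 0 < Real.exp t := Real.exp_pos t
  have hzL : 0 < Real.exp L := Real.exp_pos L
  have hz1 : 1 ≤ Real.exp t := Real.one_le_exp ht0
  have hzle : Real.exp t ≤ Real.exp L := Real.exp_le_exp.2 htL
  rw [Real.exp_neg] at hL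
  have hexp : A * Real.exp L ^ 2 + B = (A * Real.exp L + B * (Real.exp L)⁻¹) * Real.exp L := by
    field_simp
  have hL2 : 0 < A * Real.exp L ^ 2 + B := by
    rw [hexp]; exact mul_pos hL hzL
  have h1t : (1:ℝ) ≤ Real.exp t ^ 2 := by nlinarith
  have h2t : Real.exp t ^ 2 ≤ Real.exp L ^ 2 := by nlinarith
  have ht2 : 0 < A * Real.exp t ^ 2 + B := by
    rcases le_or_gt 0 A with hA | hA
    · have := mul_le_mul_of_nonneg_left h1t hA
      linarith
    · have := mul_le_mul_of_nonpos_left h2t hA.le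
      linarith
  rw [Real.exp_neg]
  have heq : A * Real.exp t + B * (Real.exp t)⁻¹ = (A * Real.exp t ^ 2 + B) / Real.exp t := by
    field_simp
  rw [heq]
  positivity

lemma cosh_sinh_comb (c s t : ℝ) :
    Real.cosh t * c + Real.sinh t * s
      = ((c + s) / 2) * Real.exp t + ((c - s) / 2) * Real.exp (-t) := by
  rw [Real.cosh_eq, Real.sinh_eq]; ring

/-! ### Existence of geodesic segments, staying in linear sublevel sets -/

lemma hdist_self (p : Hyp n) : hdist p p = 0 := by
  rw [hdist_eq, E_self]
  simp [arcoshR]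

lemma E_phi (a b : Hyp n) : E a b = -(mdot (phi a) (phi b)) := by
  rw [mdot_phi_phi]; ring

lemma seg_exists (p q : Hyp n) :
    ∃ s : Set (Hyp n), IsSeg hdist s p q ∧
      ∀ Λ : M n → ℝ, (∀ v w, Λ (v + w) = Λ v + Λ w) → (∀ (r : ℝ) v, Λ (r • v) = r * Λ v) →
        Λ (phi p) ≤ 0 → Λ (phi q) ≤ 0 → ∀ z ∈ s, Λ (phi z) ≤ 0 := by
  by_cases hpq : p = q
  · subst hpq
    refine ⟨(fun _ => p) '' Set.Icc 0 (hdist p p), ⟨fun _ => p, rfl, rfl, ?_, rfl⟩, ?_⟩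
    · intro u hu v hv
      rw [hdist_self] at hu hv
      have hu0 : u = 0 := le_antisymm hu.2 hu.1
      have hv0 : v = 0 := le_antisymm hv.2 hv.1
      rw [hu0, hv0, hdist_self]
      norm_num
    · rintro Λ _ _ hp _ z ⟨t, _, rfl⟩
      exact hp
  · have hE : 1 < E p q := one_lt_E_of_ne hpq
    have hLpos : 0 < hdist p q := by rw [hdist_eq]; exact arcoshR_pos hE
    set L := hdist p q with hLd
    have hcoshL : Real.cosh L = E p q := by rw [hLd, hdist_eq]; exact cosh_arcoshR (one_le_E p q)
    have hS : 0 < Real.sinh L := Real.sinh_pos_iff.2 hLpos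
    set S := Real.sinh L with hSd
    set C := Real.cosh L with hCd
    set Bv := S⁻¹ • (phi q - C • phi p) with hBv
    have hpp : mdot (phi p) (phi p) = -1 := mdot_phi_self p
    have hqq : mdot (phi q) (phi q) = -1 := mdot_phi_self q
    have hpq2 : mdot (phi p) (phi q) = -C := by rw [mdot_phi_phi, hcoshL]
    have hqp2 : mdot (phi q) (phi p) = -C := by rw [mdot_comm]; exact hpq2
    have hC2 : C ^ 2 - 1 = S ^ 2 := by
      rw [hCd, hSd]; have := Real.cosh_sq L; linarith
    have hpB : mdot (phi p) Bv = 0 := by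
      rw [hBv]
      rw [mdot_smul_right, mdot_sub_right, mdot_smul_right, hpq2, hpp]
      ring
    have hBp : mdot Bv (phi p) = 0 := by rw [mdot_comm]; exact hpB
    have hBB : mdot Bv Bv = 1 := by
      rw [hBv]
      simp only [mdot_smul_left, mdot_smul_right, mdot_sub_left, mdot_sub_right,
        hqq, hpp, hqp2, hpq2]
      field_simp
      linarith
    set V : ℝ → M n := fun t => Real.cosh t • phi p + Real.sinh t • Bv with hV
    have hVmm : ∀ u v : ℝ, mdot (V u) (V v) = -Real.cosh (u - v) := by
      intro u v
      rw [hV]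
      simp only [mdot_add_left, mdot_add_right, mdot_smul_left, mdot_smul_right,
        hpp, hBB, hpB, hBp, Real.cosh_sub]
      ring
    have hV0 : V 0 = phi p := by
      rw [hV]; simp
    have hVL : V L = phi q := by
      rw [hV]
      show C • phi p + S • Bv = phi q
      rw [hBv, smul_smul, mul_inv_cancel₀ hS.ne', one_smul]
      abel
    have hlinV : ∀ (Λ : M n → ℝ), (∀ v w, Λ (v + w) = Λ v + Λ w) →
        (∀ (r : ℝ) v, Λ (r • v) = r * Λ v) →
        ∀ t, Λ (V t) = Real.cosh t * Λ (phi p) + Real.sinh t * Λ Bv := by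
      intro Λ hadd hsmul t
      rw [hV]
      show Λ (Real.cosh t • phi p + Real.sinh t • Bv) = _
      rw [hadd, hsmul, hsmul]
    have hFadd : ∀ v w : M n, (v + w).2.2 - (v + w).2.1 = (v.2.2 - v.2.1) + (w.2.2 - w.2.1) := by
      intro v w; simp [Prod.snd_add]; ring
    have hFsmul : ∀ (r : ℝ) (v : M n), (r • v).2.2 - (r • v).2.1 = r * (v.2.2 - v.2.1) := by
      intro r v; simp [Prod.smul_snd, smul_eq_mul]; ring
    have hFc := hlinV (fun W => W.2.2 - W.2.1) hFadd hFsmul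
    have hfp : 0 < (phi p).2.2 - (phi p).2.1 := by
      rw [phi_f_eq]; exact inv_pos.2 p.2
    have hfq : 0 < (phi q).2.2 - (phi q).2.1 := by
      rw [phi_f_eq]; exact inv_pos.2 q.2
    have hpos : ∀ t ∈ Set.Icc (0:ℝ) L, 0 < (V t).2.2 - (V t).2.1 := by
      intro t ht
      have h1 : (V t).2.2 - (V t).2.1
          = Real.cosh t * ((phi p).2.2 - (phi p).2.1) + Real.sinh t * (Bv.2.2 - Bv.2.1) :=
        hFc t
      rw [h1, cosh_sinh_comb]
      apply exp_comb_pos ht.1 ht.2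
      · have := hFc 0
        rw [hV0] at this
        simp only [Real.cosh_zero, Real.sinh_zero] at this
        nlinarith
      · have := hFc L
        rw [hVL, cosh_sinh_comb] at this
        rw [← this]
        exact hfq
    set γ : ℝ → Hyp n := fun t =>
      if h : 0 < (V t).2.2 - (V t).2.1 then psi (V t) h else p with hγd
    have hγphi : ∀ t ∈ Set.Icc (0:ℝ) L, phi (γ t) = V t := by
      intro t ht
      have h := hpos t ht
      have hm : mdot (V t) (V t) = -1 := by
        rw [hVmm t t, sub_self, Real.cosh_zero]
      rw [hγd]
      simp only [dif_pos h]
      exact phi_psi _ hm h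
    have h0mem : (0:ℝ) ∈ Set.Icc (0:ℝ) L := ⟨le_refl _, hLpos.le⟩
    have hLmem : L ∈ Set.Icc (0:ℝ) L := ⟨hLpos.le, le_refl _⟩
    have hγ0 : γ 0 = p := by
      apply phi_inj
      rw [hγphi 0 h0mem, hV0]
    have hγL : γ L = q := by
      apply phi_inj
      rw [hγphi L hLmem, hVL]
    refine ⟨γ '' Set.Icc 0 (hdist p q), ⟨γ, hγ0, hγL, ?_, rfl⟩, ?_⟩
    · intro u hu v hv
      rw [← hLd] at hu hv
      have hEuv : E (γ u) (γ v) = Real.cosh (u - v) := by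
        rw [E_phi, hγphi u hu, hγphi v hv, hVmm]
        ring
      rw [hdist_eq, hEuv, ← Real.cosh_abs]
      exact arcoshR_cosh (abs_nonneg _)
    · rintro Λ hadd hsmul hp hq z ⟨t, ht, rfl⟩
      rw [← hLd] at ht
      rw [hγphi t ht, hlinV Λ hadd hsmul t, cosh_sinh_comb]
      apply exp_comb_nonpos ht.1 ht.2
      · have := hlinV Λ hadd hsmul 0
        rw [hV0] at this
        simp only [Real.cosh_zero, Real.sinh_zero] at this
        nlinarith [hp]
      · have := hlinV Λ hadd hsmul L
        rw [hVL, cosh_sinh_comb] at this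
        rw [← this]
        exact hq


/-! ### Structure of arbitrary geodesic segments -/

lemma seg_structure {o : Hyp n} {γ : ℝ → Hyp n} {L : ℝ} (hLpos : 0 < L)
    (hγ0 : γ 0 = o)
    (hd : ∀ u ∈ Set.Icc (0:ℝ) L, ∀ v ∈ Set.Icc (0:ℝ) L, hdist (γ u) (γ v) = |u - v|) :
    ∃ Bv : M n, mdot Bv Bv = 1 ∧ mdot (phi o) Bv = 0 ∧
      ∀ t ∈ Set.Icc (0:ℝ) L, phi (γ t) = Real.cosh t • phi o + Real.sinh t • Bv := by
  have hm : ∀ u ∈ Set.Icc (0:ℝ) L, ∀ v ∈ Set.Icc (0:ℝ) L,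
      mdot (phi (γ u)) (phi (γ v)) = -Real.cosh (u - v) := by
    intro u hu v hv
    have h := hd u hu v hv
    rw [hdist_eq] at h
    have h2 : Real.cosh (arcoshR (E (γ u) (γ v))) = Real.cosh |u - v| := by rw [h]
    rw [cosh_arcoshR (one_le_E _ _), Real.cosh_abs] at h2
    rw [mdot_phi_phi, h2]
  have h0mem : (0:ℝ) ∈ Set.Icc (0:ℝ) L := ⟨le_refl _, hLpos.le⟩
  have hLmem : L ∈ Set.Icc (0:ℝ) L := ⟨hLpos.le, le_refl _⟩
  have hS : 0 < Real.sinh L := Real.sinh_pos_iff.2 hLpos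
  set S := Real.sinh L with hSd
  set C := Real.cosh L with hCd
  have hC2 : C ^ 2 - 1 = S ^ 2 := by
    rw [hCd, hSd]; have := Real.cosh_sq L; linarith
  set O := phi o with hOd
  set Q := phi (γ L) with hQd
  have hOO : mdot O O = -1 := mdot_phi_self o
  have hQQ : mdot Q Q = -1 := mdot_phi_self (γ L)
  have hOQ : mdot O Q = -C := by
    rw [hOd, hQd, ← hγ0]
    rw [hm 0 h0mem L hLmem]
    rw [show (0:ℝ) - L = -L by ring, Real.cosh_neg, hCd]
  have hQO : mdot Q O = -C := by rw [mdot_comm]; exact hOQ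
  set Bv := S⁻¹ • (Q - C • O) with hBv
  have hOB : mdot O Bv = 0 := by
    rw [hBv]
    simp only [mdot_smul_right, mdot_sub_right, mdot_smul_right, hOQ, hOO]
    ring
  have hBO : mdot Bv O = 0 := by rw [mdot_comm]; exact hOB
  have hBB : mdot Bv Bv = 1 := by
    rw [hBv]
    simp only [mdot_smul_left, mdot_smul_right, mdot_sub_left, mdot_sub_right,
      hQQ, hOO, hQO, hOQ]
    field_simp
    linarith
  refine ⟨Bv, hBB, hOB, ?_⟩
  intro t ht
  set P := phi (γ t) with hPd
  have hPP : mdot P P = -1 := mdot_phi_self (γ t)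
  have hPO : mdot P O = -Real.cosh t := by
    rw [hPd, hOd, ← hγ0, hm t ht 0 h0mem]
    rw [show t - 0 = t by ring]
  have hOP : mdot O P = -Real.cosh t := by rw [mdot_comm]; exact hPO
  have hPQ : mdot P Q = -Real.cosh (t - L) := hm t ht L hLmem
  have hQP : mdot Q P = -Real.cosh (t - L) := by rw [mdot_comm]; exact hPQ
  have hPB : mdot P Bv = Real.sinh t := by
    rw [hBv]
    simp only [mdot_smul_right, mdot_sub_right, mdot_smul_right, hPQ, hPO]
    rw [Real.cosh_sub]
    field_simp
    rw [hSd, hCd]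
    ring
  have hBP : mdot Bv P = Real.sinh t := by rw [mdot_comm]; exact hPB
  set Z := P - Real.cosh t • O - Real.sinh t • Bv with hZ
  have hZO : mdot Z O = 0 := by
    rw [hZ]
    simp only [mdot_sub_left, mdot_smul_left, hPO, hOO, hBO]
    ring
  have hZZ : mdot Z Z = 0 := by
    rw [hZ]
    simp only [mdot_sub_left, mdot_sub_right, mdot_smul_left, mdot_smul_right,
      hPP, hOO, hBB, hPO, hOP, hPB, hBP, hOB, hBO]
    have ht2 := Real.cosh_sq t
    linear_combination ht2
  have hZO' : mdot Z (phi o) = 0 := by rw [← hOd]; exact hZO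
  have hZ0 : Z = 0 := (mdot_orth_nonneg hZO').2 hZZ
  rw [hZ, sub_sub, sub_eq_zero] at hZ0
  have hfin : P = Real.cosh t • O + Real.sinh t • Bv := hZ0
  rw [hPd, hOd] at hfin
  exact hfin

/-! ### The core separation inequality -/

lemma core {cD b L : ℝ} (hcD : 3/2 < cD) (hb : b ^ 2 ≤ cD ^ 2 - 1) (hL : 0 < L)
    (hfar : ∀ t, 0 ≤ t → t ≤ L → -cD * Real.cosh t + b * Real.sinh t < -(3/2)) :
    (9/(8*cD) - cD) * Real.cosh L + b * Real.sinh L ≤ 0 := by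
  by_contra hG
  push_neg at hG
  set k := 9/(8*cD) with hkd
  clear_value k
  have hcD0 : 0 < cD := by linarith
  have hk : k * cD = 9/8 := by rw [hkd]; field_simp
  have hkpos : 0 < k := by rw [hkd]; positivity
  have hklt : k < 3/4 := by
    rw [hkd, div_lt_iff₀ (by linarith : (0:ℝ) < 8 * cD)]
    linarith
  have hcoshL : 1 ≤ Real.cosh L := Real.one_le_cosh L
  have hsinhL : 0 < Real.sinh L := Real.sinh_pos_iff.2 hL
  have hsc : Real.sinh L ≤ Real.cosh L := by
    have h1 := Real.cosh_sub_sinh L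
    have h2 := Real.exp_pos (-L)
    linarith
  have hbgt : cD - k < b := by
    have h1 : (cD - k) * Real.sinh L < b * Real.sinh L := by nlinarith
    exact (mul_lt_mul_iff_left₀ hsinhL).1 h1
  have hbpos : 0 < b := by linarith
  have hR2lt : cD ^ 2 - b ^ 2 < 9/4 - k ^ 2 := by nlinarith
  have hR2ge : 1 ≤ cD ^ 2 - b ^ 2 := by linarith
  set R := Real.sqrt (cD ^ 2 - b ^ 2) with hRd
  clear_value R
  have hRsq : R ^ 2 = cD ^ 2 - b ^ 2 := by
    rw [hRd]; exact Real.sq_sqrt (by linarith)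
  have hRnn : 0 ≤ R := by rw [hRd]; exact Real.sqrt_nonneg _
  have hR1 : 1 ≤ R := by nlinarith
  have hRpos : 0 < R := by linarith
  have hRlt : R < 3/2 := by nlinarith
  rcases le_or_gt (b / R) (Real.sinh L) with hc | hc
  · set τ := Real.arsinh (b / R) with hτ
    have hτ0 : 0 ≤ τ := Real.arsinh_nonneg_iff.2 (by positivity)
    have hτL : τ ≤ L := by
      have h1 : τ ≤ Real.arsinh (Real.sinh L) := Real.arsinh_le_arsinh.2 hc
      rwa [Real.arsinh_sinh] at h1
    have hsτ : Real.sinh τ = b / R := Real.sinh_arsinh _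
    have hcτ : Real.cosh τ = cD / R := by
      rw [hτ, Real.cosh_arsinh,
        show 1 + (b/R)^2 = (cD/R)^2 by field_simp; linarith [hRsq]]
      exact Real.sqrt_sq (by positivity)
    have hft := hfar τ hτ0 hτL
    rw [hsτ, hcτ] at hft
    have hlhs : -cD * (cD/R) + b * (b/R) = -R := by
      have h1 : -cD * (cD/R) + b * (b/R) = -(R^2)/R := by
        rw [show -(R^2:ℝ) = b^2 - cD^2 by linarith [hRsq]]
        field_simp
        ring
      rw [h1, sq, neg_div, mul_div_assoc, div_self hRpos.ne', mul_one]
    rw [hlhs] at hft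
    linarith
  · have hcoshlt : Real.cosh L < cD / R := by
      have h1 := Real.cosh_sq L
      have h2 : Real.sinh L ^ 2 < (b/R) ^ 2 := by nlinarith
      have h3 : (cD/R) ^ 2 = 1 + (b/R) ^ 2 := by
        rw [div_pow, div_pow ]
        rw [show (cD:ℝ)^2 = R^2 + b^2 by linarith [hRsq]]
        field_simp
      have h4 : (0:ℝ) ≤ cD / R := by positivity
      have h6 : Real.cosh L ^ 2 < (cD/R) ^ 2 := by linarith
      exact lt_of_pow_lt_pow_left₀ 2 h4 h6
    have hfl := hfar L hL.le (le_refl L)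
    have h4 : k * Real.cosh L < k * (cD / R) := mul_lt_mul_of_pos_left hcoshlt hkpos
    have h5 : k * (cD / R) ≤ 9/8 := by
      rw [show k * (cD/R) = (k*cD)/R by ring, hk]
      exact div_le_self (by norm_num) hR1
    have h7 : k * Real.cosh L = (k - cD) * Real.cosh L + cD * Real.cosh L := by ring
    linarith only [hG, hfl, h4, h5, h7]

end HypAux

open HypAux

/-- **Convex unions.** If `A` and `B` are convex subsets of hyperbolic space with
nonempty intersection, then the convex hull of `A ∪ B` is contained in the
`Δ`-neighborhood of `A ∪ B`, where `Δ = log((3+√5)/2)`. -/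
theorem convex_union_hull_close {n : ℕ} (A B : Set (Hyp n))
    (hA : DConvex hdist A) (hB : DConvex hdist B) (hAB : (A ∩ B).Nonempty) :
    dConvexHull hdist (A ∪ B) ⊆ {x | ∃ y ∈ A ∪ B, hdist x y ≤ thinDelta} := by
  intro x hx
  by_contra hcon
  simp only [Set.mem_setOf_eq] at hcon
  push_neg at hcon
  obtain ⟨o, hoA, hoB⟩ := hAB
  have hfar : ∀ y ∈ A ∪ B, (3:ℝ)/2 < E x y := by
    intro y hy
    by_contra hle
    push_neg at hle
    have h1 : hdist x y ≤ thinDelta := by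
      rw [hdist_eq, thinDelta_eq]
      exact arcoshR_le_arcoshR (one_le_E x y) hle
    exact absurd h1 (not_le.2 (hcon y hy))
  set cD := E x o with hcDd
  have hcD : 3/2 < cD := hfar o (Or.inl hoA)
  have hcD0 : 0 < cD := by linarith
  set k := 9/(8*cD) with hkd
  have hkpos : 0 < k := by rw [hkd]; positivity
  have hklt : k < 3/4 := by
    rw [hkd, div_lt_iff₀ (by linarith : (0:ℝ) < 8*cD)]; linarith
  set Λ : M n → ℝ := fun W => mdot (phi x) W - k * mdot (phi o) W with hΛd
  have hΛadd : ∀ v w, Λ (v + w) = Λ v + Λ w := by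
    intro v w; simp only [hΛd, mdot_add_right]; ring
  have hΛsmul : ∀ (r : ℝ) v, Λ (r • v) = r * Λ v := by
    intro r v; simp only [hΛd, mdot_smul_right]; ring
  set C : Set (Hyp n) := {z | Λ (phi z) ≤ 0} with hCsd
  have hoo : mdot (phi o) (phi o) = -1 := mdot_phi_self o
  have hxo : mdot (phi x) (phi o) = -cD := by rw [mdot_phi_phi, ← hcDd]
  have hox : mdot (phi o) (phi x) = -cD := by rw [mdot_comm]; exact hxo
  have hsubset : ∀ S : Set (Hyp n), DConvex hdist S → o ∈ S →
      (∀ z ∈ S, (3:ℝ)/2 < E x z) → S ⊆ C := by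
    intro S hconv hoS hfarS a ha
    by_cases hao : a = o
    · show Λ (phi a) ≤ 0
      rw [hao, hΛd]
      simp only []
      rw [hxo, hoo]
      linarith
    · obtain ⟨s, ⟨γ, hγ0, hγL, hγd, hsdef⟩, hsS⟩ := hconv o hoS a ha
      have hne : ¬ o = a := fun h => hao h.symm
      have hEoa : 1 < E o a := one_lt_E_of_ne hne
      have hLpos : 0 < hdist o a := by rw [hdist_eq]; exact arcoshR_pos hEoa
      obtain ⟨Bv, hBB, hOB, hstruct⟩ := seg_structure hLpos hγ0 hγd
      have hBO : mdot Bv (phi o) = 0 := by rw [mdot_comm]; exact hOB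
      set L := hdist o a with hLd
      set b := mdot (phi x) Bv with hbd
      have hBx : mdot Bv (phi x) = b := by rw [mdot_comm, ← hbd]
      set Y := (phi x - cD • phi o) - b • Bv with hYd
      have hYO : mdot Y (phi o) = 0 := by
        rw [hYd]
        simp only [mdot_sub_left, mdot_smul_left, hxo, hoo, hBO]
        ring
      have hxx : mdot (phi x) (phi x) = -1 := mdot_phi_self x
      have hYYe : mdot Y Y = cD ^ 2 - 1 - b ^ 2 := by
        rw [hYd]
        simp only [mdot_sub_left, mdot_sub_right, mdot_smul_left, mdot_smul_right,
          hxx, hoo, hxo, hox, hOB, hBO, hBB, hBx, ← hbd]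
        ring
      have hb2 : b ^ 2 ≤ cD ^ 2 - 1 := by
        have := (mdot_orth_nonneg hYO).1
        rw [hYYe] at this
        linarith
      have hsfar : ∀ t, 0 ≤ t → t ≤ L → -cD * Real.cosh t + b * Real.sinh t < -(3/2) := by
        intro t ht0 htL
        have htmem : t ∈ Set.Icc (0:ℝ) L := ⟨ht0, htL⟩
        have hz : γ t ∈ S := hsS (hsdef ▸ Set.mem_image_of_mem γ htmem)
        have h1 : (3:ℝ)/2 < E x (γ t) := hfarS _ hz
        have h2 : mdot (phi x) (phi (γ t)) = -(E x (γ t)) := mdot_phi_phi _ _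
        rw [hstruct t htmem, mdot_add_right, mdot_smul_right, mdot_smul_right, hxo, ← hbd] at h2
        linarith
      have hcore := core hcD hb2 hLpos hsfar
      show Λ (phi a) ≤ 0
      have hφa : phi a = Real.cosh L • phi o + Real.sinh L • Bv := by
        rw [← hγL]; exact hstruct L ⟨hLpos.le, le_refl _⟩
      rw [hΛd]
      simp only []
      rw [hφa, mdot_add_right, mdot_smul_right, mdot_smul_right,
        mdot_add_right, mdot_smul_right, mdot_smul_right, hxo, hoo, hOB, ← hbd]
      rw [← hkd] at hcore
      nlinarith [hcore]
  have hsubA : A ⊆ C := hsubset A hA hoA (fun z hz => hfar z (Or.inl hz))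
  have hsubB : B ⊆ C := hsubset B hB hoB (fun z hz => hfar z (Or.inr hz))
  have hconvC : DConvex hdist C := by
    intro p hp q hq
    obtain ⟨s, hseg, hsub⟩ := seg_exists p q
    exact ⟨s, hseg, fun z hz => hsub Λ hΛadd hΛsmul hp hq z hz⟩
  have hxC : x ∈ C := hx C ⟨Set.union_subset hsubA hsubB, hconvC⟩
  have hxx : mdot (phi x) (phi x) = -1 := mdot_phi_self x
  have hΛx : Λ (phi x) = -1 + k * cD := by
    rw [hΛd]
    simp only []
    rw [hxx, hox]
    ring
  have hkcD : k * cD = 9/8 := by rw [hkd]; field_simp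
  have hxC' : Λ (phi x) ≤ 0 := hxC
  rw [hΛx, hkcD] at hxC'
  linarith
end
end

section
/- If A and B are convex subsets of hyperbolic space ℍⁿ with A ∩ B nonempty, then the union X of all geodesic segments [a,b] with a ∈ A and b ∈ B is a convex set, and X equals the convex hull of A ∪ B. -/
set_option maxHeartbeats 6000000


noncomputable section

namespace HypJoin

variable {n : ℕ}


theorem cosh_arcoshR {x : ℝ} (hx : 1 ≤ x) : Real.cosh (arcoshR x) = x := by
  have h1 : (0:ℝ) ≤ x ^ 2 - 1 := by nlinarith
  have hs : Real.sqrt (x ^ 2 - 1) ^ 2 = x ^ 2 - 1 := Real.sq_sqrt h1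
  have hs0 : 0 ≤ Real.sqrt (x ^ 2 - 1) := Real.sqrt_nonneg _
  have hpos : 0 < x + Real.sqrt (x ^ 2 - 1) := by nlinarith
  rw [Real.cosh_eq, arcoshR, Real.exp_log hpos, Real.exp_neg, Real.exp_log hpos]
  rw [inv_eq_one_div]
  field_simp
  nlinarith

theorem arcoshR_nonneg {x : ℝ} (hx : 1 ≤ x) : 0 ≤ arcoshR x := by
  have hs0 : 0 ≤ Real.sqrt (x ^ 2 - 1) := Real.sqrt_nonneg _
  have : (1:ℝ) ≤ x + Real.sqrt (x ^ 2 - 1) := by linarith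
  exact Real.log_nonneg this

theorem arcoshR_pos {x : ℝ} (hx : 1 < x) : 0 < arcoshR x := by
  have hs0 : 0 ≤ Real.sqrt (x ^ 2 - 1) := Real.sqrt_nonneg _
  have : (1:ℝ) < x + Real.sqrt (x ^ 2 - 1) := by linarith
  exact Real.log_pos this

theorem arcoshR_cosh {t : ℝ} (ht : 0 ≤ t) : arcoshR (Real.cosh t) = t := by
  have h1 : (1:ℝ) ≤ Real.cosh t := Real.one_le_cosh t
  have hs : Real.cosh t ^ 2 - 1 = Real.sinh t ^ 2 := by
    have := Real.cosh_sq t; linarith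
  have hsh : 0 ≤ Real.sinh t := by rw [show (0:ℝ) = Real.sinh 0 by simp]; exact (Real.sinh_le_sinh).2 ht
  rw [arcoshR, hs, Real.sqrt_sq hsh, Real.cosh_eq, Real.sinh_eq]
  have : (Real.exp t + Real.exp (-t)) / 2 + (Real.exp t - Real.exp (-t)) / 2 = Real.exp t := by ring
  rw [this, Real.log_exp]

-- injectivity helper: cosh t = x, with t ≥ 0 determines t
theorem eq_of_cosh_eq {s t : ℝ} (hs : 0 ≤ s) (ht : 0 ≤ t)
    (h : Real.cosh s = Real.cosh t) : s = t := by
  have := Real.cosh_le_cosh.1 h.le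
  have := Real.cosh_le_cosh.1 h.ge
  rw [abs_of_nonneg hs, abs_of_nonneg ht] at *
  linarith

theorem sinh_arcoshR {x : ℝ} (hx : 1 ≤ x) :
    Real.sinh (arcoshR x) = Real.sqrt (x ^ 2 - 1) := by
  have h0 : 0 ≤ arcoshR x := arcoshR_nonneg hx
  have h1 : Real.sinh (arcoshR x) ^ 2 = x ^ 2 - 1 := by
    have := Real.cosh_sq (arcoshR x)
    rw [cosh_arcoshR hx] at this; linarith
  have h2 : 0 ≤ Real.sinh (arcoshR x) := by rw [show (0:ℝ) = Real.sinh 0 by simp]; exact (Real.sinh_le_sinh).2 h0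
  rw [← h1, Real.sqrt_sq h2]


/-- ambient Minkowski space: time × (space × extra) -/
abbrev F (n : ℕ) := ℝ × EuclideanSpace ℝ (Fin n) × ℝ

def Phi (p : Hyp n) : F n :=
  ((‖p.1.1‖ ^ 2 + p.1.2 ^ 2 + 1) / (2 * p.1.2),
   (p.1.2)⁻¹ • p.1.1,
   (‖p.1.1‖ ^ 2 + p.1.2 ^ 2 - 1) / (2 * p.1.2))

def bf (X Y : F n) : ℝ := inner ℝ X.2.1 Y.2.1 + X.2.2 * Y.2.2 - X.1 * Y.1

theorem bf_comm (X Y : F n) : bf X Y = bf Y X := by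
  rw [bf, bf, real_inner_comm]; ring

theorem bf_add_left (X Y Z : F n) : bf (X + Y) Z = bf X Z + bf Y Z := by
  simp only [bf, Prod.fst_add, Prod.snd_add, inner_add_left]; ring

theorem bf_sub_left (X Y Z : F n) : bf (X - Y) Z = bf X Z - bf Y Z := by
  simp only [bf, Prod.fst_sub, Prod.snd_sub, inner_sub_left]; ring

theorem bf_smul_left (c : ℝ) (X Z : F n) : bf (c • X) Z = c * bf X Z := by
  simp only [bf, Prod.smul_fst, Prod.smul_snd, smul_eq_mul, real_inner_smul_left]; ring

theorem bf_add_right (X Y Z : F n) : bf X (Y + Z) = bf X Y + bf X Z := by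
  rw [bf_comm, bf_add_left, bf_comm Y X, bf_comm Z X]

theorem bf_sub_right (X Y Z : F n) : bf X (Y - Z) = bf X Y - bf X Z := by
  rw [bf_comm, bf_sub_left, bf_comm Y X, bf_comm Z X]

theorem bf_smul_right (c : ℝ) (X Z : F n) : bf X (c • Z) = c * bf X Z := by
  rw [bf_comm, bf_smul_left, bf_comm Z X]

/-- key formula: the Minkowski product of two `Phi` points computes cosh of hdist. -/
theorem bf_Phi_Phi (p q : Hyp n) :
    bf (Phi p) (Phi q)
      = -(1 + (dist p.1.1 q.1.1 ^ 2 + (p.1.2 - q.1.2) ^ 2) / (2 * p.1.2 * q.1.2)) := by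
  have hp : (0:ℝ) < p.1.2 := p.2
  have hq : (0:ℝ) < q.1.2 := q.2
  have hd : dist p.1.1 q.1.1 ^ 2 = ‖p.1.1‖ ^ 2 - 2 * inner ℝ p.1.1 q.1.1 + ‖q.1.1‖ ^ 2 := by
    rw [dist_eq_norm, norm_sub_sq_real]
  have hi : (inner ℝ ((p.1.2)⁻¹ • p.1.1) ((q.1.2)⁻¹ • q.1.1) : ℝ)
      = (p.1.2)⁻¹ * ((q.1.2)⁻¹ * inner ℝ p.1.1 q.1.1) := by
    rw [real_inner_smul_left, real_inner_smul_right]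
  rw [bf, Phi, Phi]
  dsimp only
  rw [hi, hd]
  field_simp
  ring

theorem bf_Phi_self (p : Hyp n) : bf (Phi p) (Phi p) = -1 := by
  rw [bf_Phi_Phi]; simp

theorem Phi_time_pos (p : Hyp n) : 0 < (Phi p).1 := by
  have hp : (0:ℝ) < p.1.2 := p.2
  have : (0:ℝ) ≤ ‖p.1.1‖ ^ 2 := sq_nonneg _
  exact div_pos (by nlinarith) (by linarith)

theorem Phi_time_ge_one (p : Hyp n) : 1 ≤ (Phi p).1 := by
  have hp : (0:ℝ) < p.1.2 := p.2
  have h : (0:ℝ) ≤ ‖p.1.1‖ ^ 2 := sq_nonneg _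
  rw [Phi]; dsimp only
  rw [le_div_iff₀ (by linarith)]
  nlinarith [sq_nonneg (p.1.2 - 1)]

theorem Phi_injective : Function.Injective (Phi (n := n)) := by
  intro p q h
  have hp : (0:ℝ) < p.1.2 := p.2
  have hq : (0:ℝ) < q.1.2 := q.2
  have h1 : (Phi p).1 - (Phi p).2.2 = (Phi q).1 - (Phi q).2.2 := by rw [h]
  have h2 : (Phi p).2.1 = (Phi q).2.1 := by rw [h]
  simp only [Phi] at h1
  have hy : 1 / p.1.2 = 1 / q.1.2 := by field_simp at h1 ⊢; linarith
  have hy2 : p.1.2 = q.1.2 := by field_simp at hy; linarith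
  simp only [Phi] at h2
  have hx : p.1.1 = q.1.1 := by
    have := congrArg (fun v => (p.1.2) • v) h2
    simpa [smul_smul, mul_inv_cancel₀ (ne_of_gt hp), hy2, mul_inv_cancel₀ (ne_of_gt hq)] using this
  apply Subtype.ext
  exact Prod.ext hx hy2

theorem Phi_surjective {X : F n} (hX : bf X X = -1) (h0 : 0 < X.1) :
    ∃ p : Hyp n, Phi p = X := by
  have hts : 0 < X.1 - X.2.2 := by
    rcases le_or_gt (X.1 - X.2.2) 0 with h | h
    · exfalso
      have hn : 0 ≤ ‖X.2.1‖ ^ 2 := sq_nonneg _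
      have : inner ℝ X.2.1 X.2.1 + X.2.2 * X.2.2 - X.1 * X.1 = -1 := hX
      rw [real_inner_self_eq_norm_sq] at this
      nlinarith
    · exact h
  refine ⟨⟨((X.1 - X.2.2)⁻¹ • X.2.1, (X.1 - X.2.2)⁻¹), by positivity⟩, ?_⟩
  have hnorm : ‖X.2.1‖ ^ 2 = X.1 ^ 2 - X.2.2 ^ 2 - 1 := by
    have : inner ℝ X.2.1 X.2.1 + X.2.2 * X.2.2 - X.1 * X.1 = -1 := hX
    rw [real_inner_self_eq_norm_sq] at this; nlinarith
  have hne : X.1 - X.2.2 ≠ 0 := ne_of_gt hts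
  rw [Phi]
  dsimp only
  refine Prod.ext ?_ (Prod.ext ?_ ?_)
  · rw [norm_smul]
    simp only [norm_inv, Real.norm_eq_abs, abs_of_pos hts]
    rw [mul_pow, hnorm]
    field_simp
    ring
  · rw [smul_smul, inv_inv, mul_inv_cancel₀ hne, one_smul]
  · rw [norm_smul]
    simp only [norm_inv, Real.norm_eq_abs, abs_of_pos hts]
    rw [mul_pow, hnorm]
    field_simp
    ring


def chy (p q : Hyp n) : ℝ := -(bf (Phi p) (Phi q))

theorem chy_eq (p q : Hyp n) :
    chy p q = 1 + (dist p.1.1 q.1.1 ^ 2 + (p.1.2 - q.1.2) ^ 2) / (2 * p.1.2 * q.1.2) := by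
  rw [chy, bf_Phi_Phi, neg_neg]

theorem one_le_chy (p q : Hyp n) : 1 ≤ chy p q := by
  rw [chy_eq]
  have hp : (0:ℝ) < p.1.2 := p.2
  have hq : (0:ℝ) < q.1.2 := q.2
  have : 0 ≤ (dist p.1.1 q.1.1 ^ 2 + (p.1.2 - q.1.2) ^ 2) / (2 * p.1.2 * q.1.2) :=
    div_nonneg (by positivity) (by positivity)
  linarith

theorem hdist_eq_arcosh (p q : Hyp n) : hdist p q = arcoshR (chy p q) := by
  rw [hdist, chy_eq]

theorem cosh_hdist (p q : Hyp n) : Real.cosh (hdist p q) = chy p q := by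
  rw [hdist_eq_arcosh]; exact cosh_arcoshR (one_le_chy p q)

theorem hdist_nonneg (p q : Hyp n) : 0 ≤ hdist p q := by
  rw [hdist_eq_arcosh]; exact arcoshR_nonneg (one_le_chy p q)

theorem chy_self (p : Hyp n) : chy p p = 1 := by
  rw [chy, bf_Phi_self]; ring

theorem hdist_self (p : Hyp n) : hdist p p = 0 := by
  have := arcoshR_cosh (le_refl (0:ℝ))
  rw [hdist_eq_arcosh, chy_self, ← Real.cosh_zero, this]

theorem eq_of_chy_eq_one {p q : Hyp n} (h : chy p q = 1) : p = q := by
  rw [chy_eq] at h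
  have hp : (0:ℝ) < p.1.2 := p.2
  have hq : (0:ℝ) < q.1.2 := q.2
  have h2 : (dist p.1.1 q.1.1 ^ 2 + (p.1.2 - q.1.2) ^ 2) / (2 * p.1.2 * q.1.2) = 0 := by
    linarith
  rw [div_eq_zero_iff] at h2
  have h3 : dist p.1.1 q.1.1 ^ 2 + (p.1.2 - q.1.2) ^ 2 = 0 := by
    rcases h2 with h | h
    · exact h
    · nlinarith
  have h4 : dist p.1.1 q.1.1 = 0 := by nlinarith [dist_nonneg (x := p.1.1) (y := q.1.1), sq_nonneg (p.1.2 - q.1.2)]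
  have h5 : p.1.2 = q.1.2 := by nlinarith [sq_nonneg (dist p.1.1 q.1.1)]
  exact Subtype.ext (Prod.ext (by rwa [dist_eq_zero] at h4) h5)

theorem chy_pos_of_ne {p q : Hyp n} (h : p ≠ q) : 1 < chy p q := by
  rcases lt_or_eq_of_le (one_le_chy p q) with h1 | h1
  · exact h1
  · exact absurd (eq_of_chy_eq_one h1.symm) h

theorem hdist_pos_of_ne {p q : Hyp n} (h : p ≠ q) : 0 < hdist p q := by
  rw [hdist_eq_arcosh]; exact arcoshR_pos (chy_pos_of_ne h)

/-- key positivity: a vector `bf`-orthogonal to a (timelike, future) hyperboloid point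
has `bf`-norm controlled from below. -/
theorem bf_orth_sq_le {X V : F n} (hX : bf X X = -1) (horth : bf X V = 0) :
    V.1 ^ 2 ≤ (X.1 ^ 2 - 1) * bf V V := by
  have hCS : (inner ℝ X.2.1 V.2.1 + X.2.2 * V.2.2 : ℝ) ^ 2
      ≤ (‖X.2.1‖ ^ 2 + X.2.2 ^ 2) * (‖V.2.1‖ ^ 2 + V.2.2 ^ 2) := by
    have hi : |(inner ℝ X.2.1 V.2.1 : ℝ)| ≤ ‖X.2.1‖ * ‖V.2.1‖ := abs_real_inner_le_norm _ _
    set i : ℝ := inner ℝ X.2.1 V.2.1 with hidef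
    have hii : i ^ 2 ≤ ‖X.2.1‖ ^ 2 * ‖V.2.1‖ ^ 2 := by
      nlinarith [(abs_le.1 hi).1, (abs_le.1 hi).2]
    have k1 : 2 * (i * (X.2.2 * V.2.2)) ≤ 2 * ((‖X.2.1‖ * ‖V.2.1‖) * |X.2.2 * V.2.2|) := by
      have l1 : i * (X.2.2 * V.2.2) ≤ |i| * |X.2.2 * V.2.2| := by
        calc i * (X.2.2 * V.2.2) ≤ |i * (X.2.2 * V.2.2)| := le_abs_self _
        _ = |i| * |X.2.2 * V.2.2| := abs_mul _ _
      have l2 : |i| * |X.2.2 * V.2.2| ≤ (‖X.2.1‖ * ‖V.2.1‖) * |X.2.2 * V.2.2| :=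
        mul_le_mul_of_nonneg_right hi (abs_nonneg _)
      linarith
    have k2 : 2 * ((‖X.2.1‖ * ‖V.2.1‖) * |X.2.2 * V.2.2|) ≤
        ‖X.2.1‖ ^ 2 * V.2.2 ^ 2 + ‖V.2.1‖ ^ 2 * X.2.2 ^ 2 := by
      rw [abs_mul]
      nlinarith [sq_nonneg (‖X.2.1‖ * |V.2.2| - ‖V.2.1‖ * |X.2.2|), sq_abs X.2.2, sq_abs V.2.2]
    nlinarith [hii, k1, k2]
  have h1 : ‖X.2.1‖ ^ 2 + X.2.2 ^ 2 = X.1 ^ 2 - 1 := by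
    have h := hX
    rw [bf, real_inner_self_eq_norm_sq] at h
    nlinarith
  have h2 : (inner ℝ X.2.1 V.2.1 : ℝ) + X.2.2 * V.2.2 = X.1 * V.1 := by
    have h := horth
    rw [bf] at h
    linarith
  have h3 : ‖V.2.1‖ ^ 2 + V.2.2 ^ 2 = bf V V + V.1 ^ 2 := by
    rw [bf, real_inner_self_eq_norm_sq]
    ring
  rw [h1, h2, h3] at hCS
  nlinarith [sq_nonneg V.1]

theorem eq_zero_of_bf_orth {X V : F n} (hX : bf X X = -1) (hX0 : 0 < X.1)
    (horth : bf X V = 0) (hnull : bf V V = 0) : V = 0 := by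
  have h := bf_orth_sq_le hX horth
  rw [hnull, mul_zero] at h
  have hv0 : V.1 = 0 := by nlinarith [sq_nonneg V.1]
  have h3 : ‖V.2.1‖ ^ 2 + V.2.2 ^ 2 = 0 := by
    have := hnull
    rw [bf, real_inner_self_eq_norm_sq, hv0] at this
    nlinarith
  have hv1 : V.2.1 = 0 := by
    have : ‖V.2.1‖ ^ 2 = 0 := by nlinarith [sq_nonneg V.2.2, sq_nonneg ‖V.2.1‖]
    simpa using (pow_eq_zero_iff (n := 2) (by norm_num)).1 this
  have hv2 : V.2.2 = 0 := by nlinarith [sq_nonneg ‖V.2.1‖, sq_nonneg V.2.2, norm_nonneg V.2.1]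
  exact Prod.ext hv0 (Prod.ext hv1 hv2)

theorem bf_combo (c1 s1 c2 s2 : ℝ) (X U : F n) :
    bf (c1 • X + s1 • U) (c2 • X + s2 • U)
      = c1 * c2 * bf X X + (c1 * s2 + s1 * c2) * bf X U + s1 * s2 * bf U U := by
  simp only [bf_add_left, bf_add_right, bf_smul_left, bf_smul_right, bf_comm U X]
  ring

/-- initial direction of the geodesic from `a` to `b` -/
def Udir (a b : Hyp n) : F n :=
  (Real.sinh (hdist a b))⁻¹ • (Phi b - Real.cosh (hdist a b) • Phi a)

section
variable {a b : Hyp n}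

theorem sinh_hdist_pos (hab : a ≠ b) : 0 < Real.sinh (hdist a b) := by
  rw [show (0:ℝ) = Real.sinh 0 by simp]
  exact Real.sinh_lt_sinh.2 (hdist_pos_of_ne hab)

theorem bf_A_U (hab : a ≠ b) : bf (Phi a) (Udir a b) = 0 := by
  rw [Udir, bf_smul_right, bf_sub_right, bf_smul_right, bf_Phi_self]
  have : bf (Phi a) (Phi b) = -(chy a b) := by rw [chy]; ring
  rw [this, ← cosh_hdist]
  ring

theorem bf_U_U (hab : a ≠ b) : bf (Udir a b) (Udir a b) = 1 := by
  have hs := sinh_hdist_pos hab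
  have hch : Real.cosh (hdist a b) ^ 2 = Real.sinh (hdist a b) ^ 2 + 1 := Real.cosh_sq _
  have hab' : bf (Phi a) (Phi b) = -Real.cosh (hdist a b) := by
    rw [cosh_hdist, chy]; ring
  rw [Udir, bf_smul_left, bf_smul_right, bf_sub_left, bf_sub_right, bf_sub_right,
    bf_smul_left, bf_smul_left, bf_smul_right, bf_smul_right, bf_Phi_self,
    bf_comm (Phi b) (Phi a), hab', bf_Phi_self]
  field_simp
  nlinarith
end

def someHyp : Hyp n := ⟨(0, 1), one_pos⟩

def unPhi (X : F n) : Hyp n :=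
  if h : bf X X = -1 ∧ 0 < X.1 then (Phi_surjective h.1 h.2).choose else someHyp

theorem Phi_unPhi {X : F n} (h1 : bf X X = -1) (h2 : 0 < X.1) : Phi (unPhi X) = X := by
  rw [unPhi, dif_pos ⟨h1, h2⟩]
  exact (Phi_surjective h1 h2).choose_spec

theorem unPhi_Phi (p : Hyp n) : unPhi (Phi p) = p :=
  Phi_injective (Phi_unPhi (bf_Phi_self p) (Phi_time_pos p))

/-- the unit-speed geodesic from `a` towards `b` -/
def geo (a b : Hyp n) (t : ℝ) : Hyp n :=
  unPhi (Real.cosh t • Phi a + Real.sinh t • Udir a b)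

section
variable {a b : Hyp n}

theorem geo_vec_bf (hab : a ≠ b) (t : ℝ) :
    bf (Real.cosh t • Phi a + Real.sinh t • Udir a b)
       (Real.cosh t • Phi a + Real.sinh t • Udir a b) = -1 := by
  rw [bf_combo, bf_Phi_self, bf_A_U hab, bf_U_U hab]
  nlinarith [Real.cosh_sq t]

theorem abs_sinh_lt_cosh (t : ℝ) : |Real.sinh t| < Real.cosh t := by
  nlinarith [Real.cosh_sq t, Real.cosh_pos t, sq_abs (Real.sinh t), abs_nonneg (Real.sinh t)]

theorem Udir_time_lt (hab : a ≠ b) : |(Udir a b).1| < (Phi a).1 := by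
  have h := bf_orth_sq_le (bf_Phi_self a) (bf_A_U hab)
  rw [bf_U_U hab, mul_one] at h
  have hA := Phi_time_pos a
  nlinarith [sq_abs ((Udir a b).1), abs_nonneg ((Udir a b).1)]

theorem geo_vec_time_pos (hab : a ≠ b) (t : ℝ) :
    0 < (Real.cosh t • Phi a + Real.sinh t • Udir a b).1 := by
  have h1 := abs_sinh_lt_cosh t
  have h2 := Udir_time_lt hab
  have h3 : (Real.cosh t • Phi a + Real.sinh t • Udir a b).1
      = Real.cosh t * (Phi a).1 + Real.sinh t * (Udir a b).1 := by
    simp [Prod.fst_add, Prod.smul_fst]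
  rw [h3]
  have h4 : |Real.sinh t| * |(Udir a b).1| < Real.cosh t * (Phi a).1 :=
    mul_lt_mul'' h1 h2 (abs_nonneg _) (abs_nonneg _)
  have h5 : -(|Real.sinh t| * |(Udir a b).1|) ≤ Real.sinh t * (Udir a b).1 := by
    rw [← abs_mul]; exact neg_abs_le _
  linarith

theorem Phi_geo (hab : a ≠ b) (t : ℝ) :
    Phi (geo a b t) = Real.cosh t • Phi a + Real.sinh t • Udir a b :=
  Phi_unPhi (geo_vec_bf hab t) (geo_vec_time_pos hab t)

theorem chy_geo_geo (hab : a ≠ b) (u v : ℝ) :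
    chy (geo a b u) (geo a b v) = Real.cosh (u - v) := by
  rw [chy, Phi_geo hab, Phi_geo hab, bf_combo, bf_Phi_self, bf_A_U hab, bf_U_U hab,
    Real.cosh_sub]
  ring

theorem hdist_geo_geo (hab : a ≠ b) (u v : ℝ) :
    hdist (geo a b u) (geo a b v) = |u - v| := by
  rw [hdist_eq_arcosh, chy_geo_geo hab, ← Real.cosh_abs, arcoshR_cosh (abs_nonneg _)]

theorem geo_zero (hab : a ≠ b) : geo a b 0 = a := by
  rw [geo]
  simp only [Real.cosh_zero, Real.sinh_zero, one_smul, zero_smul, add_zero]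
  exact unPhi_Phi a

theorem geo_dist (hab : a ≠ b) : geo a b (hdist a b) = b := by
  have hs := sinh_hdist_pos hab
  rw [geo, Udir, smul_smul, mul_inv_cancel₀ (ne_of_gt hs), one_smul]
  have : Real.cosh (hdist a b) • Phi a + (Phi b - Real.cosh (hdist a b) • Phi a) = Phi b := by
    abel
  rw [this, unPhi_Phi]

end

section
variable {a b : Hyp n}

theorem chy_eq_of_hdist_eq {p q : Hyp n} {u : ℝ} (hu : 0 ≤ u) (h : hdist p q = u) :
    chy p q = Real.cosh u := by
  rw [← cosh_hdist, h]

theorem point_unique (hab : a ≠ b) {m : Hyp n} {u : ℝ} (hu0 : 0 ≤ u) (hud : u ≤ hdist a b)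
    (h1 : hdist a m = u) (h2 : hdist m b = hdist a b - u) : m = geo a b u := by
  set d := hdist a b with hd
  have hs := sinh_hdist_pos hab
  have hAM : bf (Phi a) (Phi m) = -Real.cosh u := by
    have := chy_eq_of_hdist_eq hu0 h1
    rw [chy] at this; linarith
  have hMB : bf (Phi m) (Phi b) = -Real.cosh (d - u) := by
    have := chy_eq_of_hdist_eq (by linarith) h2
    rw [chy] at this; linarith
  have hMA : bf (Phi m) (Phi a) = -Real.cosh u := by rw [bf_comm]; exact hAM
  have hBM : bf (Phi b) (Phi m) = -Real.cosh (d - u) := by rw [bf_comm]; exact hMB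
  have hUM : bf (Udir a b) (Phi m) = Real.sinh u := by
    rw [Udir, bf_smul_left, bf_sub_left, bf_smul_left, hBM, hAM, Real.cosh_sub]
    field_simp
    rw [← hd]; ring
  have hMU : bf (Phi m) (Udir a b) = Real.sinh u := by rw [bf_comm]; exact hUM
  have hMM := bf_Phi_self m
  have hAA := bf_Phi_self a
  have hAU := bf_A_U hab
  have hUA : bf (Udir a b) (Phi a) = 0 := by rw [bf_comm]; exact hAU
  set W : F n := Phi m - (Real.cosh u • Phi a + Real.sinh u • Udir a b) with hW
  have hAW : bf (Phi a) W = 0 := by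
    rw [hW, bf_sub_right, bf_add_right, bf_smul_right, bf_smul_right, bf_Phi_self,
      bf_A_U hab, hAM]
    ring
  have hWW : bf W W = 0 := by
    simp only [hW, bf_sub_left, bf_sub_right, bf_add_left, bf_add_right, bf_smul_left,
      bf_smul_right, hMM, hAA, hAU, hUA, hMA, hAM, hUM, hMU, bf_U_U hab]
    nlinarith [Real.cosh_sq u]
  have hW0 : W = 0 := eq_zero_of_bf_orth (bf_Phi_self a) (Phi_time_pos a) hAW hWW
  have hM : Phi m = Real.cosh u • Phi a + Real.sinh u • Udir a b := by
    have := sub_eq_zero.1 hW0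
    exact this
  apply Phi_injective
  rw [hM, Phi_geo hab]

theorem isSeg_geo_image (hab : a ≠ b) :
    IsSeg hdist (geo a b '' Set.Icc 0 (hdist a b)) a b :=
  ⟨geo a b, geo_zero hab, geo_dist hab, fun u _ v _ => hdist_geo_geo hab u v, rfl⟩

theorem isSeg_unique (hab : a ≠ b) {s : Set (Hyp n)} (h : IsSeg hdist s a b) :
    s = geo a b '' Set.Icc 0 (hdist a b) := by
  obtain ⟨γ, hγ0, hγd, hiso, hs⟩ := h
  rw [hs]
  apply Set.image_congr
  intro u hu
  have h0mem : (0:ℝ) ∈ Set.Icc (0:ℝ) (hdist a b) := ⟨le_refl _, hdist_nonneg a b⟩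
  have hdmem : hdist a b ∈ Set.Icc (0:ℝ) (hdist a b) := ⟨hdist_nonneg a b, le_refl _⟩
  have h1 : hdist a (γ u) = u := by
    have := hiso 0 h0mem u hu
    rw [hγ0] at this
    rw [this, abs_of_nonpos (by linarith [hu.1]), neg_sub, sub_zero]
  have h2 : hdist (γ u) b = hdist a b - u := by
    have := hiso u hu (hdist a b) hdmem
    rw [hγd] at this
    rw [this, abs_of_nonpos (by linarith [hu.2])]
    ring
  exact point_unique hab hu.1 hu.2 h1 h2

theorem isSeg_self (a : Hyp n) : IsSeg hdist {a} a a := by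
  refine ⟨fun _ => a, rfl, rfl, ?_, ?_⟩
  · intro u hu v hv
    rw [hdist_self] at hu hv
    have hu' : u = 0 := le_antisymm hu.2 hu.1
    have hv' : v = 0 := le_antisymm hv.2 hv.1
    rw [hu', hv', hdist_self]
    simp
  · rw [hdist_self, Set.Icc_self, Set.image_singleton]

theorem isSeg_self_unique {a : Hyp n} {s : Set (Hyp n)} (h : IsSeg hdist s a a) : s = {a} := by
  obtain ⟨γ, hγ0, _, _, hs⟩ := h
  rw [hs, hdist_self, Set.Icc_self, Set.image_singleton, hγ0]

end

/-- Klein model coordinates -/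
def kl (p : Hyp n) : EuclideanSpace ℝ (Fin n) × ℝ :=
  (((Phi p).1)⁻¹ • (Phi p).2.1, (Phi p).2.2 / (Phi p).1)

def iota (z : EuclideanSpace ℝ (Fin n) × ℝ) : F n := (1, z.1, z.2)

theorem Phi_eq_smul_iota (p : Hyp n) : Phi p = (Phi p).1 • iota (kl p) := by
  have h0 : (Phi p).1 ≠ 0 := ne_of_gt (Phi_time_pos p)
  refine Prod.ext ?_ (Prod.ext ?_ ?_)
  · simp [iota]
  · show (Phi p).2.1 = (Phi p).1 • (kl p).1
    rw [kl]
    dsimp only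
    rw [smul_smul, mul_inv_cancel₀ h0, one_smul]
  · show (Phi p).2.2 = (Phi p).1 • (kl p).2
    rw [kl]
    dsimp only
    rw [smul_eq_mul]
    field_simp

theorem kl_injective : Function.Injective (kl (n := n)) := by
  intro p q h
  have hp := Phi_time_pos p
  have hq := Phi_time_pos q
  have h1 : (Phi p).1 * ((Phi p).1 * bf (iota (kl p)) (iota (kl p))) = -1 := by
    rw [← bf_smul_right, ← bf_smul_left, ← Phi_eq_smul_iota p, bf_Phi_self]
  have h2 : (Phi q).1 * ((Phi q).1 * bf (iota (kl p)) (iota (kl p))) = -1 := by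
    rw [h, ← bf_smul_right, ← bf_smul_left, ← Phi_eq_smul_iota q, bf_Phi_self]
  have hc : bf (iota (kl p)) (iota (kl p)) ≠ 0 := by
    intro h0
    rw [h0] at h1
    norm_num at h1
  have hsq : (Phi p).1 = (Phi q).1 := by
    have h3 : ((Phi p).1 ^ 2 - (Phi q).1 ^ 2) * bf (iota (kl p)) (iota (kl p)) = 0 := by
      linear_combination h1 - h2
    rcases mul_eq_zero.1 h3 with h4 | h4
    · have h5 : ((Phi p).1 - (Phi q).1) * ((Phi p).1 + (Phi q).1) = 0 := by
        linear_combination h4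
      rcases mul_eq_zero.1 h5 with h6 | h6
      · linarith
      · linarith
    · exact absurd h4 hc
  apply Phi_injective
  rw [Phi_eq_smul_iota p, Phi_eq_smul_iota q, h, hsq]

theorem kl_comb {a b m : Hyp n} {α β : ℝ} (h : Phi m = α • Phi a + β • Phi b) :
    (Phi m).1 • kl m = (α * (Phi a).1) • kl a + (β * (Phi b).1) • kl b := by
  have h1 : (Phi m).1 • iota (kl m)
      = α • ((Phi a).1 • iota (kl a)) + β • ((Phi b).1 • iota (kl b)) := by
    rw [← Phi_eq_smul_iota a, ← Phi_eq_smul_iota b, ← Phi_eq_smul_iota m]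
    exact h
  have h2 := congrArg Prod.snd h1
  simpa [iota, Prod.smul_snd, smul_smul] using h2

theorem Phi_fst_comb {a b m : Hyp n} {α β : ℝ} (h : Phi m = α • Phi a + β • Phi b) :
    (Phi m).1 = α * (Phi a).1 + β * (Phi b).1 := by
  rw [h]; simp [Prod.fst_add, Prod.smul_fst]

theorem kl_mem_segment_of_comb {a b m : Hyp n} {α β : ℝ} (hα : 0 ≤ α) (hβ : 0 ≤ β)
    (h : Phi m = α • Phi a + β • Phi b) : kl m ∈ segment ℝ (kl a) (kl b) := by
  have hM0 := Phi_fst_comb h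
  have hMpos := Phi_time_pos m
  have hApos := Phi_time_pos a
  have hBpos := Phi_time_pos b
  refine ⟨α * (Phi a).1 / (Phi m).1, β * (Phi b).1 / (Phi m).1, by positivity, by positivity,
    ?_, ?_⟩
  · field_simp
    linarith
  · have h2 := kl_comb h
    have h3 : kl m = ((Phi m).1)⁻¹ • ((α * (Phi a).1) • kl a + (β * (Phi b).1) • kl b) := by
      rw [← h2, smul_smul, inv_mul_cancel₀ (ne_of_gt hMpos), one_smul]
    rw [h3]
    match_scalars <;> field_simp <;> ring

theorem Phi_geo_comb {a b : Hyp n} (hab : a ≠ b) (t : ℝ) :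
    Phi (geo a b t) = (Real.sinh (hdist a b - t) / Real.sinh (hdist a b)) • Phi a
      + (Real.sinh t / Real.sinh (hdist a b)) • Phi b := by
  have hs : Real.sinh (hdist a b) ≠ 0 := ne_of_gt (sinh_hdist_pos hab)
  rw [Phi_geo hab, Udir, Real.sinh_sub]
  match_scalars <;> field_simp <;> ring

theorem kl_geo_mem {a b : Hyp n} (hab : a ≠ b) {t : ℝ} (ht : t ∈ Set.Icc 0 (hdist a b)) :
    kl (geo a b t) ∈ segment ℝ (kl a) (kl b) := by
  have hs := sinh_hdist_pos hab
  have h1 : 0 ≤ Real.sinh (hdist a b - t) := by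
    rw [show (0:ℝ) = Real.sinh 0 by simp]
    exact Real.sinh_le_sinh.2 (by linarith [ht.2])
  have h2 : 0 ≤ Real.sinh t := by
    rw [show (0:ℝ) = Real.sinh 0 by simp]
    exact Real.sinh_le_sinh.2 ht.1
  exact kl_mem_segment_of_comb (div_nonneg h1 hs.le) (div_nonneg h2 hs.le) (Phi_geo_comb hab t)

theorem exists_geo_of_mem_segment {a b : Hyp n} (hab : a ≠ b) {z : EuclideanSpace ℝ (Fin n) × ℝ}
    (hz : z ∈ segment ℝ (kl a) (kl b)) :
    ∃ t ∈ Set.Icc 0 (hdist a b), kl (geo a b t) = z := by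
  obtain ⟨l1, l2, hl1, hl2, hsum, hzeq⟩ := hz
  set d := hdist a b with hd
  have hs := sinh_hdist_pos hab
  have hA0 := Phi_time_pos a
  have hB0 := Phi_time_pos b
  have hAB : bf (Phi a) (Phi b) = -Real.cosh d := by
    rw [cosh_hdist, chy]; ring
  have hcd : 1 ≤ Real.cosh d := Real.one_le_cosh d
  set al' := l1 / (Phi a).1 with hal'
  set be' := l2 / (Phi b).1 with hbe'
  have hal'0 : 0 ≤ al' := div_nonneg hl1 hA0.le
  have hbe'0 : 0 ≤ be' := div_nonneg hl2 hB0.le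
  set N : F n := al' • Phi a + be' • Phi b with hN
  have hbfN : bf N N = -(al' ^ 2 + be' ^ 2 + 2 * al' * be' * Real.cosh d) := by
    rw [hN, bf_combo, bf_Phi_self, bf_Phi_self, hAB]
    ring
  set r2 := al' ^ 2 + be' ^ 2 + 2 * al' * be' * Real.cosh d with hr2
  have hr2pos : 0 < r2 := by
    rcases lt_or_ge 0 l1 with h | h
    · have : 0 < al' := div_pos h hA0
      nlinarith [mul_nonneg (mul_nonneg hal'0 hbe'0) (by linarith : (0:ℝ) ≤ Real.cosh d), sq_nonneg be']
    · have hl2' : 0 < l2 := by linarith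
      have : 0 < be' := div_pos hl2' hB0
      nlinarith [mul_nonneg (mul_nonneg hal'0 hbe'0) (by linarith : (0:ℝ) ≤ Real.cosh d), sq_nonneg al']
  set r := Real.sqrt r2 with hr
  have hrpos : 0 < r := Real.sqrt_pos.2 hr2pos
  have hrsq : r ^ 2 = r2 := Real.sq_sqrt hr2pos.le
  clear_value al' be' N r2 r
  set al := r⁻¹ * al' with hal
  set be := r⁻¹ * be' with hbe
  have hal0 : 0 ≤ al := mul_nonneg (inv_nonneg.2 hrpos.le) hal'0
  have hbe0 : 0 ≤ be := mul_nonneg (inv_nonneg.2 hrpos.le) hbe'0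
  set M : F n := r⁻¹ • N with hM
  have hMcomb : M = al • Phi a + be • Phi b := by
    rw [hM, hN, smul_add, smul_smul, smul_smul]
  have hrne : r ≠ 0 := ne_of_gt hrpos
  have hbfM : bf M M = -1 := by
    rw [hM, bf_smul_left, bf_smul_right, hbfN, ← hrsq]
    field_simp
  have hM1 : M.1 = r⁻¹ := by
    have : N.1 = al' * (Phi a).1 + be' * (Phi b).1 := by
      rw [hN]; simp [Prod.fst_add, Prod.smul_fst]
    have hN1 : N.1 = 1 := by
      rw [this, hal', hbe']
      field_simp
      linarith
    rw [hM, Prod.smul_fst, smul_eq_mul, hN1, mul_one]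
  have hM1pos : 0 < M.1 := by rw [hM1]; exact inv_pos.2 hrpos
  obtain ⟨m, hm⟩ := Phi_surjective hbfM hM1pos
  have hmcomb : Phi m = al • Phi a + be • Phi b := by rw [hm, hMcomb]
  have hnorm1 : al ^ 2 + be ^ 2 + 2 * al * be * Real.cosh d = 1 := by
    have h1 : bf (Phi m) (Phi m) = -1 := bf_Phi_self m
    rw [hmcomb, bf_combo, bf_Phi_self, bf_Phi_self, hAB] at h1
    nlinarith [h1]
  clear_value al be M
  -- the parameter
  set cA := al + be * Real.cosh d with hcA
  have hcA2 : cA ^ 2 = 1 + be ^ 2 * (Real.cosh d ^ 2 - 1) := by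
    rw [hcA]; nlinarith [hnorm1]
  have hcA1 : 1 ≤ cA := by
    have h0 : 0 ≤ cA := by rw [hcA]; nlinarith
    nlinarith [Real.cosh_sq d, sq_nonneg (Real.sinh d), sq_nonneg be]
  set t := arcoshR cA with ht
  have hcosht : Real.cosh t = cA := cosh_arcoshR hcA1
  have hsinht : Real.sinh t = be * Real.sinh d := by
    have h1 : Real.sinh t = Real.sqrt (cA ^ 2 - 1) := sinh_arcoshR hcA1
    have h2 : cA ^ 2 - 1 = (be * Real.sinh d) ^ 2 := by
      rw [hcA2]; nlinarith [Real.cosh_sq d]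
    rw [h1, h2, Real.sqrt_sq (mul_nonneg hbe0 hs.le)]
  have ht0 : 0 ≤ t := arcoshR_nonneg hcA1
  clear_value cA t
  have htd : t ≤ d := by
    have hab1 : al + be ≤ 1 := by
      nlinarith [hnorm1, mul_nonneg hal0 hbe0, sq_nonneg (al + be)]
    have hbe1 : be ≤ 1 := by nlinarith [sq_nonneg al, mul_nonneg (mul_nonneg hal0 hbe0) (by linarith : (0:ℝ) ≤ Real.cosh d)]
    have hle : Real.cosh t ≤ Real.cosh d := by
      rw [hcosht, hcA]
      nlinarith
    have := Real.cosh_le_cosh.1 hle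
    rw [abs_of_nonneg ht0, abs_of_nonneg (hdist_nonneg a b)] at this
    exact this
  refine ⟨t, ⟨ht0, htd⟩, ?_⟩
  have hgeom : geo a b t = m := by
    apply Phi_injective
    rw [Phi_geo hab, hcosht, hsinht, hmcomb, Udir, hcA]
    match_scalars <;> field_simp <;> ring
  rw [hgeom]
  -- kl m = z
  have h2 := kl_comb hmcomb
  have hMfst : (Phi m).1 = r⁻¹ := by rw [hm, hM1]
  have hco1 : al * (Phi a).1 = r⁻¹ * l1 := by
    rw [hal, hal']; field_simp
  have hco2 : be * (Phi b).1 = r⁻¹ * l2 := by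
    rw [hbe, hbe']; field_simp
  rw [hMfst, hco1, hco2] at h2
  have h3 : r⁻¹ • kl m = r⁻¹ • (l1 • kl a + l2 • kl b) := by
    rw [h2, smul_add, smul_smul, smul_smul]
  have h4 : kl m = l1 • kl a + l2 • kl b := smul_right_injective _ (inv_ne_zero hrne) h3
  rw [h4, hzeq]

def hseg (a b : Hyp n) : Set (Hyp n) := {m | kl m ∈ segment ℝ (kl a) (kl b)}

theorem hseg_self (a : Hyp n) : hseg a a = {a} := by
  ext m
  simp only [hseg, Set.mem_setOf_eq, segment_same, Set.mem_singleton_iff]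
  exact ⟨fun h => kl_injective h, fun h => by rw [h]⟩

theorem hseg_eq_geo {a b : Hyp n} (hab : a ≠ b) :
    hseg a b = geo a b '' Set.Icc 0 (hdist a b) := by
  ext m
  constructor
  · intro hm
    obtain ⟨t, ht, hklz⟩ := exists_geo_of_mem_segment hab hm
    exact ⟨t, ht, kl_injective hklz⟩
  · rintro ⟨t, ht, rfl⟩
    exact kl_geo_mem hab ht

theorem isSeg_hseg (a b : Hyp n) : IsSeg hdist (hseg a b) a b := by
  by_cases hab : a = b
  · subst hab
    rw [hseg_self]
    exact isSeg_self a
  · rw [hseg_eq_geo hab]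
    exact isSeg_geo_image hab

theorem isSeg_iff {a b : Hyp n} {s : Set (Hyp n)} :
    IsSeg hdist s a b ↔ s = hseg a b := by
  constructor
  · intro h
    by_cases hab : a = b
    · subst hab
      rw [isSeg_self_unique h, hseg_self]
    · rw [isSeg_unique hab h, hseg_eq_geo hab]
  · rintro rfl
    exact isSeg_hseg a b

theorem kl_image_hseg (a b : Hyp n) : kl '' hseg a b = segment ℝ (kl a) (kl b) := by
  apply Set.Subset.antisymm
  · rintro z ⟨m, hm, rfl⟩
    exact hm
  · intro z hz
    by_cases hab : a = b
    · subst hab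
      rw [segment_same] at hz
      exact ⟨a, by rw [hseg_self]; rfl, by rw [hz]⟩
    · obtain ⟨t, ht, hkl⟩ := exists_geo_of_mem_segment hab hz
      exact ⟨geo a b t, kl_geo_mem hab ht, hkl⟩

theorem convex_kl_image {S : Set (Hyp n)} (hS : DConvex hdist S) : Convex ℝ (kl '' S) := by
  rw [convex_iff_segment_subset]
  rintro _ ⟨p, hp, rfl⟩ _ ⟨q, hq, rfl⟩ z hz
  obtain ⟨s, hs1, hs2⟩ := hS p hp q hq
  rw [isSeg_iff] at hs1
  subst hs1
  rw [← kl_image_hseg p q] at hz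
  obtain ⟨m, hm, rfl⟩ := hz
  exact ⟨m, hs2 hm, rfl⟩

end HypJoin

open HypJoin

/-- **Join of two convex sets.** If `A` and `B` are convex subsets of hyperbolic space
with nonempty intersection, then the union `X` of all geodesic segments `[a,b]` with
`a ∈ A`, `b ∈ B` is convex, and equals the convex hull of `A ∪ B`. -/
theorem join_eq_convexHull {n : ℕ} (A B : Set (Hyp n))
    (hA : DConvex hdist A) (hB : DConvex hdist B) (hAB : (A ∩ B).Nonempty) :
    DConvex hdist (⋃₀ {s | ∃ a ∈ A, ∃ b ∈ B, IsSeg hdist s a b}) ∧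
      ⋃₀ {s | ∃ a ∈ A, ∃ b ∈ B, IsSeg hdist s a b} = dConvexHull hdist (A ∪ B) := by
  obtain ⟨p, hpA, hpB⟩ := hAB
  set J := ⋃₀ {s | ∃ a ∈ A, ∃ b ∈ B, IsSeg hdist s a b} with hJdef
  have hJ_eq : ∀ m, m ∈ J ↔ ∃ a ∈ A, ∃ b ∈ B, m ∈ hseg a b := by
    intro m
    constructor
    · rintro ⟨s, ⟨a, ha, b, hb, hseg'⟩, hms⟩
      exact ⟨a, ha, b, hb, (isSeg_iff.1 hseg') ▸ hms⟩
    · rintro ⟨a, ha, b, hb, hm⟩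
      exact ⟨hseg a b, ⟨a, ha, b, hb, isSeg_hseg a b⟩, hm⟩
  have hconvA : Convex ℝ (kl '' A) := convex_kl_image hA
  have hconvB : Convex ℝ (kl '' B) := convex_kl_image hB
  have hklJ : kl '' J = convexJoin ℝ (kl '' A) (kl '' B) := by
    apply Set.Subset.antisymm
    · rintro _ ⟨m, hm, rfl⟩
      obtain ⟨a, ha, b, hb, hmseg⟩ := (hJ_eq m).1 hm
      exact mem_convexJoin.2 ⟨kl a, ⟨a, ha, rfl⟩, kl b, ⟨b, hb, rfl⟩, hmseg⟩
    · intro z hz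
      obtain ⟨x, ⟨a, ha, rfl⟩, y, ⟨b, hb, rfl⟩, hzseg⟩ := mem_convexJoin.1 hz
      rw [← kl_image_hseg a b] at hzseg
      obtain ⟨m, hm, rfl⟩ := hzseg
      exact ⟨m, (hJ_eq m).2 ⟨a, ha, b, hb, hm⟩, rfl⟩
  have hconvJ : Convex ℝ (kl '' J) := hklJ ▸ Convex.convexJoin hconvA hconvB
  have hDJ : DConvex hdist J := by
    intro x hx y hy
    refine ⟨hseg x y, isSeg_hseg x y, ?_⟩
    intro m hm
    have h1 : kl m ∈ kl '' J :=
      (convex_iff_segment_subset.1 hconvJ) ⟨x, hx, rfl⟩ ⟨y, hy, rfl⟩ hm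
    obtain ⟨m', hm', hkl⟩ := h1
    rwa [← kl_injective hkl]
  refine ⟨hDJ, ?_⟩
  apply Set.Subset.antisymm
  · intro m hm
    rw [dConvexHull, Set.mem_sInter]
    rintro C ⟨hC1, hC2⟩
    obtain ⟨a, ha, b, hb, hmseg⟩ := (hJ_eq m).1 hm
    obtain ⟨s, hs1, hs2⟩ := hC2 a (hC1 (Or.inl ha)) b (hC1 (Or.inr hb))
    rw [isSeg_iff] at hs1
    subst hs1
    exact hs2 hmseg
  · apply Set.sInter_subset_of_mem
    refine ⟨?_, hDJ⟩
    rintro x (hx | hx)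
    · exact (hJ_eq x).2 ⟨x, hx, p, hpB, left_mem_segment ℝ (kl x) (kl p)⟩
    · exact (hJ_eq x).2 ⟨p, hpA, x, hx, right_mem_segment ℝ (kl p) (kl x)⟩
end
end

section
/- Identify ℍⁿ with upper half-space {x ∈ ℝⁿ : xₙ > 0} with metric ds/xₙ. Let S be a convex subset of the horosphere {xₙ = 1} (convex with respect to the induced Euclidean metric on the horosphere). Then the set Ω = {(x₁,…,xₙ) : (x₁,…,x_{n−1},1) ∈ S and xₙ ≥ 1} is a convex subset of ℍⁿ. -/
noncomputable section

lemma arcoshR_cosh (t : ℝ) : arcoshR (Real.cosh t) = |t| := by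
  unfold arcoshR
  have h1 : Real.cosh t ^ 2 - 1 = Real.sinh t ^ 2 := by
    rw [Real.cosh_sq]; ring
  rw [h1, Real.sqrt_sq_eq_abs, Real.abs_sinh, ← Real.cosh_abs,
    Real.cosh_add_sinh, Real.log_exp]

lemma key_cosh (u v : ℝ) :
    1 + ((Real.tanh u - Real.tanh v) ^ 2 + (1 / Real.cosh u - 1 / Real.cosh v) ^ 2)
      * (Real.cosh u * Real.cosh v) / 2 = Real.cosh (u - v) := by
  have hu := Real.cosh_pos u
  have hv := Real.cosh_pos v
  rw [Real.cosh_sub, Real.tanh_eq_sinh_div_cosh, Real.tanh_eq_sinh_div_cosh]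
  have h1 := Real.cosh_sq u
  have h2 := Real.cosh_sq v
  field_simp
  linear_combination (-(Real.cosh v ^ 2)) * h1 +
    (-(Real.cosh u ^ 2)) * h2

lemma tanh_mono : Monotone Real.tanh := by
  intro u v h
  rw [Real.tanh_eq_sinh_div_cosh, Real.tanh_eq_sinh_div_cosh,
    div_le_div_iff₀ (Real.cosh_pos u) (Real.cosh_pos v)]
  have h1 : 0 ≤ Real.sinh (v - u) := Real.sinh_nonneg_iff.2 (by linarith)
  rw [Real.sinh_sub] at h1
  nlinarith [Real.cosh_pos u, Real.cosh_pos v]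

lemma hdist_vert {n : ℕ} (x : EuclideanSpace ℝ (Fin n)) (h σ : ℝ) (hh : 0 < h)
    (hσ : σ = 1 ∨ σ = -1) (u v : ℝ)
    (hu : (0:ℝ) < h * Real.exp (σ * u)) (hv : (0:ℝ) < h * Real.exp (σ * v)) :
    hdist (⟨(x, h * Real.exp (σ * u)), hu⟩ : Hyp n)
      ⟨(x, h * Real.exp (σ * v)), hv⟩ = |u - v| := by
  unfold hdist
  have harg : 1 + (dist x x ^ 2 + (h * Real.exp (σ * u) - h * Real.exp (σ * v)) ^ 2) /
      (2 * (h * Real.exp (σ * u)) * (h * Real.exp (σ * v))) = Real.cosh (u - v) := by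
    rw [dist_self]
    have hcc : Real.cosh (u - v) = Real.cosh (σ * u - σ * v) := by
      rcases hσ with rfl | rfl
      · ring_nf
      · rw [show (-1 : ℝ) * u - -1 * v = -(u - v) by ring, Real.cosh_neg]
    rw [hcc, Real.cosh_eq, show -(σ * u - σ * v) = σ * v - σ * u by ring,
      Real.exp_sub, Real.exp_sub]
    have e1 := Real.exp_ne_zero (σ * u)
    have e2 := Real.exp_ne_zero (σ * v)
    field_simp
    ring
  rw [harg, arcoshR_cosh]

lemma hdist_circle {n : ℕ} (x w : EuclideanSpace ℝ (Fin n)) (hw : ‖w‖ = 1)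
    (r : ℝ) (hr : 0 < r) (u v : ℝ)
    (hu : (0:ℝ) < r / Real.cosh u) (hv : (0:ℝ) < r / Real.cosh v) :
    hdist (⟨(x + (r * Real.tanh u) • w, r / Real.cosh u), hu⟩ : Hyp n)
      ⟨(x + (r * Real.tanh v) • w, r / Real.cosh v), hv⟩ = |u - v| := by
  unfold hdist
  have hd : dist (x + (r * Real.tanh u) • w) (x + (r * Real.tanh v) • w)
      = r * |Real.tanh u - Real.tanh v| := by
    rw [dist_add_left, dist_eq_norm, ← sub_smul, norm_smul, hw, mul_one,
      Real.norm_eq_abs, show r * Real.tanh u - r * Real.tanh v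
        = r * (Real.tanh u - Real.tanh v) by ring, abs_mul, abs_of_pos hr]
  rw [hd]
  have hcu := Real.cosh_pos u
  have hcv := Real.cosh_pos v
  have harg : 1 + ((r * |Real.tanh u - Real.tanh v|) ^ 2 + (r / Real.cosh u - r / Real.cosh v) ^ 2) /
      (2 * (r / Real.cosh u) * (r / Real.cosh v)) = Real.cosh (u - v) := by
    rw [← key_cosh u v, mul_pow, sq_abs]
    field_simp
  rw [harg, arcoshR_cosh]

/-- **Product cusps are convex.**  In the upper half-space model, if `S` is a convex
subset of the horosphere `{xₙ = 1}` (convex for the induced Euclidean metric), then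
`Ω = {x : (x₁,…,x_{n−1},1) ∈ S and xₙ ≥ 1}` is a convex subset of hyperbolic space. -/
theorem product_cusp_convex {n : ℕ} (S : Set (EuclideanSpace ℝ (Fin n)))
    (hS : Convex ℝ S) :
    DConvex hdist {p : Hyp n | p.1.1 ∈ S ∧ 1 ≤ p.1.2} := by
  rintro a ⟨haS, ha1⟩ b ⟨hbS, hb1⟩
  have hA : (0:ℝ) < a.1.2 := a.2
  have hB : (0:ℝ) < b.1.2 := b.2
  by_cases hxx : a.1.1 = b.1.1
  · -- vertical geodesic
    set A := a.1.2 with hAdef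
    set B := b.1.2 with hBdef
    set σ : ℝ := if A ≤ B then 1 else -1 with hσdef
    have hσ : σ = 1 ∨ σ = -1 := by unfold σ; split <;> simp
    set L : ℝ := |Real.log (B / A)| with hLdef
    have hL : 0 ≤ L := abs_nonneg _
    have hexpL : A * Real.exp (σ * L) = B := by
      rcases le_or_gt A B with h | h
      · have h1 : (0:ℝ) ≤ Real.log (B / A) :=
          Real.log_nonneg ((one_le_div hA).2 h)
        have : σ = 1 := by unfold σ; simp [h]
        rw [this, hLdef, abs_of_nonneg h1, one_mul, Real.exp_log (by positivity)]
        field_simp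
      · have h1 : Real.log (B / A) ≤ 0 :=
          Real.log_nonpos (by positivity) ((div_le_one hA).2 h.le)
        have hs : σ = -1 := by unfold σ; simp [not_le.2 h]
        rw [hs, hLdef, abs_of_nonpos h1]
        rw [show (-1:ℝ) * -Real.log (B / A) = Real.log (B / A) by ring,
          Real.exp_log (by positivity)]
        field_simp
    set γ : ℝ → Hyp n := fun u => ⟨(a.1.1, A * Real.exp (σ * u)), by positivity⟩ with hγdef
    have hdγ : ∀ u v : ℝ, hdist (γ u) (γ v) = |u - v| := fun u v =>
      hdist_vert a.1.1 A σ hA hσ u v (by positivity) (by positivity)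
    have hγ0 : γ 0 = a := by
      apply Subtype.ext
      apply Prod.ext
      · rfl
      · show A * Real.exp (σ * 0) = A; simp
    have hγL : γ L = b := by
      apply Subtype.ext
      apply Prod.ext
      · exact hxx
      · exact hexpL
    have hdab : hdist a b = L := by
      rw [← hγ0, ← hγL, hdγ, zero_sub, abs_neg, abs_of_nonneg hL]
    refine ⟨γ '' Set.Icc 0 (hdist a b), ⟨γ, hγ0, by rw [hdab]; exact hγL, fun u _ v _ => hdγ u v, rfl⟩, ?_⟩
    rintro _ ⟨u, hu, rfl⟩
    rw [hdab] at hu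
    refine ⟨haS, ?_⟩
    show (1:ℝ) ≤ A * Real.exp (σ * u)
    rcases hσ with hs | hs
    · rw [hs, one_mul]
      calc (1:ℝ) ≤ A := ha1
        _ = A * 1 := (mul_one A).symm
        _ ≤ A * Real.exp u := by
            have := Real.one_le_exp hu.1
            exact mul_le_mul_of_nonneg_left this hA.le
    · rw [hs]
      calc (1:ℝ) ≤ B := hb1
        _ = A * Real.exp (σ * L) := hexpL.symm
        _ ≤ A * Real.exp (-1 * u) := by
            apply mul_le_mul_of_nonneg_left _ hA.le
            apply Real.exp_le_exp.2
            rw [hs]; nlinarith [hu.2]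
  · -- semicircular geodesic
    set xa := a.1.1 with hxadef
    set xb := b.1.1 with hxbdef
    set A := a.1.2 with hAdef
    set B := b.1.2 with hBdef
    set D : ℝ := dist xa xb with hDdef
    have hD : 0 < D := dist_pos.2 hxx
    set c : ℝ := (D ^ 2 + B ^ 2 - A ^ 2) / (2 * D) with hcdef
    set r : ℝ := Real.sqrt (c ^ 2 + A ^ 2) with hrdef
    have hr2 : r ^ 2 = c ^ 2 + A ^ 2 := Real.sq_sqrt (by positivity)
    have hr : 0 < r := Real.sqrt_pos.2 (by positivity)
    have hr2' : r ^ 2 = (D - c) ^ 2 + B ^ 2 := by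
      rw [hr2, hcdef]; field_simp; ring
    set w : EuclideanSpace ℝ (Fin n) := D⁻¹ • (xb - xa) with hwdef
    have hw : ‖w‖ = 1 := by
      rw [hwdef, norm_smul, norm_inv, Real.norm_eq_abs, abs_of_pos hD,
        show ‖xb - xa‖ = D by rw [hDdef, dist_eq_norm, norm_sub_rev]]
      field_simp
    have hDw : D • w = xb - xa := by
      rw [hwdef, smul_smul, mul_inv_cancel₀ hD.ne', one_smul]
    set sa : ℝ := Real.arsinh (-c / A) with hsadef
    set sb : ℝ := Real.arsinh ((D - c) / B) with hsbdef
    have hssa : Real.sinh sa = -c / A := Real.sinh_arsinh _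
    have hssb : Real.sinh sb = (D - c) / B := Real.sinh_arsinh _
    have hcsa : Real.cosh sa = r / A := by
      rw [hsadef, Real.cosh_arsinh,
        show 1 + (-c / A) ^ 2 = (c ^ 2 + A ^ 2) / A ^ 2 by field_simp; ring,
        Real.sqrt_div (by positivity), Real.sqrt_sq hA.le, hrdef]
    have hcsb : Real.cosh sb = r / B := by
      rw [hsbdef, Real.cosh_arsinh,
        show 1 + ((D - c) / B) ^ 2 = ((D - c) ^ 2 + B ^ 2) / B ^ 2 by field_simp; ring,
        Real.sqrt_div (by positivity), Real.sqrt_sq hB.le, ← hr2',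
        Real.sqrt_sq hr.le]
    have htsa : r * Real.tanh sa = -c := by
      rw [Real.tanh_eq_sinh_div_cosh, hssa, hcsa]
      field_simp
    have htsb : r * Real.tanh sb = D - c := by
      rw [Real.tanh_eq_sinh_div_cosh, hssb, hcsb]
      field_simp
    have hsasb : sa ≤ sb := by
      have h0 : 0 < Real.sinh (sb - sa) := by
        rw [Real.sinh_sub, hssa, hssb, hcsa, hcsb,
          show (D - c) / B * (r / A) - r / B * (-c / A) = r * D / (A * B) by
            field_simp; ring]
        positivity
      have := Real.sinh_pos_iff.1 h0
      linarith
    set x0 : EuclideanSpace ℝ (Fin n) := xa + c • w with hx0def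
    set γ : ℝ → Hyp n := fun u =>
      ⟨(x0 + (r * Real.tanh (sa + u)) • w, r / Real.cosh (sa + u)),
        div_pos hr (Real.cosh_pos _)⟩ with hγdef
    have hdγ : ∀ u v : ℝ, hdist (γ u) (γ v) = |u - v| := by
      intro u v
      have h := hdist_circle x0 w hw r hr (sa + u) (sa + v)
        (div_pos hr (Real.cosh_pos _)) (div_pos hr (Real.cosh_pos _))
      rw [add_sub_add_left_eq_sub] at h
      exact h
    set L : ℝ := sb - sa with hLdef
    have hL : 0 ≤ L := by simp [hLdef]; linarith
    have hγ0 : γ 0 = a := by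
      apply Subtype.ext
      apply Prod.ext
      · show x0 + (r * Real.tanh (sa + 0)) • w = xa
        rw [add_zero, htsa, hx0def]
        module
      · show r / Real.cosh (sa + 0) = A
        rw [add_zero, hcsa]
        field_simp
    have hγL : γ L = b := by
      apply Subtype.ext
      apply Prod.ext
      · show x0 + (r * Real.tanh (sa + L)) • w = xb
        rw [hLdef, add_sub_cancel, htsb, hx0def]
        have : xa + c • w + (D - c) • w = xa + D • w := by module
        rw [this, hDw]
        abel
      · show r / Real.cosh (sa + L) = B
        rw [hLdef, add_sub_cancel, hcsb]
        field_simp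
    have hdab : hdist a b = L := by
      rw [← hγ0, ← hγL, hdγ, zero_sub, abs_neg, abs_of_nonneg hL]
    refine ⟨γ '' Set.Icc 0 (hdist a b),
      ⟨γ, hγ0, by rw [hdab]; exact hγL, fun u _ v _ => hdγ u v, rfl⟩, ?_⟩
    rintro _ ⟨u, hu, rfl⟩
    rw [hdab] at hu
    have hs1 : sa ≤ sa + u := by linarith [hu.1]
    have hs2 : sa + u ≤ sb := by have := hu.2; rw [hLdef] at this; linarith
    constructor
    · -- horizontal membership
      show x0 + (r * Real.tanh (sa + u)) • w ∈ S
      set t : ℝ := r * Real.tanh (sa + u) with htdef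
      have ht0 : -c ≤ t := by
        rw [← htsa, htdef]
        exact mul_le_mul_of_nonneg_left (tanh_mono hs1) hr.le
      have ht1 : t ≤ D - c := by
        rw [← htsb, htdef]
        exact mul_le_mul_of_nonneg_left (tanh_mono hs2) hr.le
      set τ : ℝ := (c + t) / D with hτdef
      have hτ0 : 0 ≤ τ := div_nonneg (by linarith) hD.le
      have hτ1 : τ ≤ 1 := (div_le_one hD).2 (by linarith)
      have hτD : τ * D = c + t := div_mul_cancel₀ _ hD.ne'
      have hpt : x0 + t • w = (1 - τ) • xa + τ • xb := by
        have hcw : x0 + t • w = xa + (c + t) • w := by rw [hx0def]; module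
        rw [hcw, ← hτD, ← smul_smul, hDw]
        module
      rw [hpt]
      exact hS haS hbS (by linarith) hτ0 (by ring)
    · -- height
      show (1:ℝ) ≤ r / Real.cosh (sa + u)
      have hcr : Real.cosh (sa + u) ≤ r := by
        have habs : |sa + u| ≤ max |sa| |sb| := by
          rw [abs_le]
          constructor
          · calc -(max |sa| |sb|) ≤ -|sa| := by
                  simp only [neg_le_neg_iff]; exact le_max_left _ _
              _ ≤ sa := neg_abs_le sa
              _ ≤ sa + u := hs1
          · calc sa + u ≤ sb := hs2
              _ ≤ |sb| := le_abs_self _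
              _ ≤ max |sa| |sb| := le_max_right _ _
        have hca : Real.cosh sa ≤ r := by
          rw [hcsa]; exact div_le_self hr.le ha1
        have hcb : Real.cosh sb ≤ r := by
          rw [hcsb]; exact div_le_self hr.le hb1
        rcases le_total |sa| |sb| with h | h
        · have : Real.cosh (sa + u) ≤ Real.cosh sb := by
            apply Real.cosh_le_cosh.2
            calc |sa + u| ≤ max |sa| |sb| := habs
              _ = |sb| := max_eq_right h
          linarith
        · have : Real.cosh (sa + u) ≤ Real.cosh sa := by
            apply Real.cosh_le_cosh.2
            calc |sa + u| ≤ max |sa| |sb| := habs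
              _ = |sa| := max_eq_left h
          linarith
      rw [le_div_iff₀ (Real.cosh_pos _), one_mul]
      exact hcr
end
end

section
/- Let M be a connected hyperbolic n-manifold, C a cusp of M with ∂_cC ⊆ closure(M \ C), and suppose M is convex. Then CH(closure(M \ C)) = closure(M \ C) ∪ CH(∂_cC), where CH denotes convex hull taken inside M. -/
noncomputable section

/-- The group of isometries of hyperbolic space, as a subgroup of the permutation
group of `Hyp n`. -/
def hIsomGrp (n : ℕ) : Subgroup (Equiv.Perm (Hyp n)) where
  carrier := {f | ∀ x y, hdist (f x) (f y) = hdist x y}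
  one_mem' := fun _ _ => rfl
  mul_mem' := by
    intro f g hf hg x y
    have : ∀ z, (f * g) z = f (g z) := fun z => rfl
    rw [this, this, hf, hg]
  inv_mem' := by
    intro f hf x y
    have := hf (f⁻¹ x) (f⁻¹ y)
    simpa using this.symm

/-- Height-preserving isometries of upper half-space: parabolic (or elliptic)
isometries fixing `∞` and preserving every horosphere about it. -/
def HeightPres {n : ℕ} (g : Equiv.Perm (Hyp n)) : Prop :=
  ∀ p : Hyp n, (g p).1.2 = p.1.2

/-- The quotient manifold `M = M̃/Γ`, as a quotient of the invariant set `M̃ ⊆ ℍⁿ`. -/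
def HQuot {n : ℕ} (Γ : Subgroup (Equiv.Perm (Hyp n))) (Mt : Set (Hyp n)) : Type _ :=
  Quot (fun x y : ↥Mt => ∃ g ∈ Γ, g x.1 = y.1)

/-- The induced quotient distance on `M = M̃/Γ`. -/
noncomputable def qd {n : ℕ} (Γ : Subgroup (Equiv.Perm (Hyp n))) (Mt : Set (Hyp n))
    (a b : HQuot Γ Mt) : ℝ :=
  sInf {r : ℝ | ∃ x y : ↥Mt, Quot.mk _ x = a ∧ Quot.mk _ y = b ∧ hdist x.1 y.1 = r}

/-- Metric closure in the quotient. -/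
def mcl {n : ℕ} (Γ : Subgroup (Equiv.Perm (Hyp n))) (Mt : Set (Hyp n))
    (A : Set (HQuot Γ Mt)) : Set (HQuot Γ Mt) :=
  A ∪ {a | ∀ ε > 0, ∃ b ∈ A, qd Γ Mt a b < ε}

/-- The convex hull in the quotient manifold: the smallest closed convex subset
containing `A`. -/
def qHull {n : ℕ} (Γ : Subgroup (Equiv.Perm (Hyp n))) (Mt : Set (Hyp n))
    (A : Set (HQuot Γ Mt)) : Set (HQuot Γ Mt) :=
  ⋂₀ {B | A ⊆ B ∧ DConvex (qd Γ Mt) B ∧ mcl Γ Mt B ⊆ B}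

/-- The cusp `C ⊆ M`: the image of the part of `M̃` in the horoball `{xₙ ≥ 1}`. -/
def cuspSet {n : ℕ} (Γ : Subgroup (Equiv.Perm (Hyp n))) (Mt : Set (Hyp n)) :
    Set (HQuot Γ Mt) :=
  Quot.mk _ '' {x : ↥Mt | 1 ≤ x.1.1.2}

/-- The cusp boundary `∂_cC ⊆ M`: the image of the part of `M̃` on the horosphere
`{xₙ = 1}`. -/
def cuspBdry {n : ℕ} (Γ : Subgroup (Equiv.Perm (Hyp n))) (Mt : Set (Hyp n)) :
    Set (HQuot Γ Mt) :=
  Quot.mk _ '' {x : ↥Mt | x.1.1.2 = 1}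


namespace TC
open Real Set

variable {n : ℕ}

lemma hh_pos (p : Hyp n) : 0 < p.1.2 := p.2

def K (p q : Hyp n) : ℝ :=
  1 + (dist p.1.1 q.1.1 ^ 2 + (p.1.2 - q.1.2) ^ 2) / (2 * p.1.2 * q.1.2)

lemma one_le_K (p q : Hyp n) : 1 ≤ K p q := by
  have h1 := hh_pos p; have h2 := hh_pos q
  have : (0:ℝ) ≤ (dist p.1.1 q.1.1 ^ 2 + (p.1.2 - q.1.2) ^ 2) / (2 * p.1.2 * q.1.2) := by
    positivity
  simp only [K]; linarith

lemma cosh_arcoshR {t : ℝ} (ht : 1 ≤ t) : Real.cosh (arcoshR t) = t := by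
  have h1 : (0:ℝ) ≤ t ^ 2 - 1 := by nlinarith
  have hs : Real.sqrt (t ^ 2 - 1) ^ 2 = t ^ 2 - 1 := Real.sq_sqrt h1
  have hs0 : 0 ≤ Real.sqrt (t ^ 2 - 1) := Real.sqrt_nonneg _
  have hpos : 0 < t + Real.sqrt (t ^ 2 - 1) := by nlinarith
  rw [arcoshR, Real.cosh_eq, Real.exp_log hpos, ← Real.log_inv, Real.exp_log (by positivity)]
  have : (t + Real.sqrt (t ^ 2 - 1))⁻¹ = t - Real.sqrt (t ^ 2 - 1) := by
    have hts : 0 < t - Real.sqrt (t ^ 2 - 1) := by nlinarith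
    rw [inv_eq_iff_eq_inv, eq_comm, inv_eq_one_div]
    rw [div_eq_iff hts.ne']
    nlinarith
  rw [this]; ring

lemma arcoshR_nonneg {t : ℝ} (ht : 1 ≤ t) : 0 ≤ arcoshR t :=
  Real.log_nonneg (by nlinarith [Real.sqrt_nonneg (t ^ 2 - 1)])

lemma hdist_eq (p q : Hyp n) : hdist p q = arcoshR (K p q) := rfl

lemma cosh_hdist (p q : Hyp n) : Real.cosh (hdist p q) = K p q :=
  cosh_arcoshR (one_le_K p q)

lemma hdist_nonneg (p q : Hyp n) : 0 ≤ hdist p q := arcoshR_nonneg (one_le_K p q)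

lemma K_comm (p q : Hyp n) : K p q = K q p := by
  simp only [K, dist_comm]; ring_nf

lemma hdist_comm (p q : Hyp n) : hdist p q = hdist q p := by
  rw [hdist_eq, hdist_eq, K_comm]

lemma hdist_self (p : Hyp n) : hdist p p = 0 := by
  have : K p p = 1 := by simp [K]
  rw [hdist_eq, this, arcoshR]
  norm_num

lemma eq_of_hdist_eq_zero {p q : Hyp n} (h : hdist p q = 0) : p = q := by
  have hK : K p q = 1 := by rw [← cosh_hdist, h, Real.cosh_zero]
  have h1 := hh_pos p; have h2 := hh_pos q
  have hnum : dist p.1.1 q.1.1 ^ 2 + (p.1.2 - q.1.2) ^ 2 = 0 := by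
    have hden : (0:ℝ) < 2 * p.1.2 * q.1.2 := by positivity
    have : (dist p.1.1 q.1.1 ^ 2 + (p.1.2 - q.1.2) ^ 2) / (2 * p.1.2 * q.1.2) = 0 := by
      simp only [K] at hK; linarith
    field_simp at this; linarith [this]
  have hd : dist p.1.1 q.1.1 = 0 := by nlinarith [sq_nonneg (dist p.1.1 q.1.1), sq_nonneg (p.1.2 - q.1.2), dist_nonneg (x := p.1.1) (y := q.1.1)]
  have hh : p.1.2 = q.1.2 := by nlinarith [sq_nonneg (p.1.2 - q.1.2), sq_nonneg (dist p.1.1 q.1.1)]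
  apply Subtype.ext
  exact Prod.ext (by rwa [dist_eq_zero] at hd) hh


/-! ### Minkowski model -/

abbrev MV (n : ℕ) := EuclideanSpace ℝ (Fin n) × ℝ × ℝ

def mB (v w : MV n) : ℝ := inner ℝ v.1 w.1 + v.2.1 * w.2.1 - v.2.2 * w.2.2

lemma mB_comm (v w : MV n) : mB v w = mB w v := by
  simp only [mB, real_inner_comm]; ring

lemma mB_add_left (u v w : MV n) : mB (u + v) w = mB u w + mB v w := by
  simp only [mB, Prod.fst_add, Prod.snd_add, inner_add_left]; ring

lemma mB_smul_left (r : ℝ) (v w : MV n) : mB (r • v) w = r * mB v w := by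
  simp only [mB, Prod.smul_fst, Prod.smul_snd, real_inner_smul_left, smul_eq_mul]; ring

lemma mB_sub_left (u v w : MV n) : mB (u - v) w = mB u w - mB v w := by
  simp only [mB, Prod.fst_sub, Prod.snd_sub, inner_sub_left]; ring

lemma mB_smul_right (r : ℝ) (v w : MV n) : mB v (r • w) = r * mB v w := by
  rw [mB_comm, mB_smul_left, mB_comm]

lemma mB_add_right (u v w : MV n) : mB u (v + w) = mB u v + mB u w := by
  rw [mB_comm, mB_add_left, mB_comm u v, mB_comm u w]

lemma mB_sub_right (u v w : MV n) : mB u (v - w) = mB u v - mB u w := by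
  rw [mB_comm, mB_sub_left, mB_comm u v, mB_comm u w]

def Phi (p : Hyp n) : MV n :=
  ((p.1.2)⁻¹ • p.1.1, (‖p.1.1‖ ^ 2 + p.1.2 ^ 2 - 1) / (2 * p.1.2),
    (‖p.1.1‖ ^ 2 + p.1.2 ^ 2 + 1) / (2 * p.1.2))

lemma mB_Phi (p q : Hyp n) : mB (Phi p) (Phi q) = -(K p q) := by
  have h1 := (hh_pos p).ne'
  have h2 := (hh_pos q).ne'
  have hd : dist p.1.1 q.1.1 ^ 2 = ‖p.1.1‖ ^ 2 - 2 * inner ℝ p.1.1 q.1.1 + ‖q.1.1‖ ^ 2 := by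
    rw [dist_eq_norm]; exact norm_sub_sq_real p.1.1 q.1.1
  simp only [mB, Phi, K, real_inner_smul_left, real_inner_smul_right, hd]
  field_simp
  ring

lemma mB_Phi_self (p : Hyp n) : mB (Phi p) (Phi p) = -1 := by
  have : K p p = 1 := by simp [K]
  rw [mB_Phi, this]

lemma mB_Phi_cosh (p q : Hyp n) : mB (Phi p) (Phi q) = -Real.cosh (hdist p q) := by
  rw [mB_Phi, cosh_hdist]

lemma Phi_t_pos (p : Hyp n) : 0 < (Phi p).2.2 := by
  have := hh_pos p
  have : (0:ℝ) < ‖p.1.1‖ ^ 2 + p.1.2 ^ 2 + 1 := by positivity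
  exact div_pos this (by have := hh_pos p; positivity)

lemma cs2 (y z : EuclideanSpace ℝ (Fin n)) (b β : ℝ) :
    ((inner ℝ y z : ℝ) + b * β) ^ 2 ≤ (‖y‖ ^ 2 + b ^ 2) * (‖z‖ ^ 2 + β ^ 2) := by
  have h1 : (inner ℝ y z : ℝ) ≤ ‖y‖ * ‖z‖ := real_inner_le_norm y z
  have h2 : -(‖y‖ * ‖z‖) ≤ (inner ℝ y z : ℝ) := by
    have := abs_real_inner_le_norm y z
    have := neg_abs_le (inner ℝ y z : ℝ)
    linarith
  rcases le_or_gt 0 (b * β) with hbβ | hbβ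
  · nlinarith [sq_nonneg (‖y‖ * β - b * ‖z‖), mul_nonneg hbβ (sub_nonneg.mpr h1)]
  · nlinarith [sq_nonneg (‖y‖ * β + b * ‖z‖),
      mul_nonneg (le_of_lt (neg_pos.mpr hbβ)) (sub_nonneg.mpr (neg_le.mp h2))]

lemma mB_self_eq (v : MV n) : mB v v = ‖v.1‖ ^ 2 + v.2.1 ^ 2 - v.2.2 ^ 2 := by
  have : mB v v = (inner ℝ v.1 v.1 : ℝ) + v.2.1 * v.2.1 - v.2.2 * v.2.2 := rfl
  rw [this, real_inner_self_eq_norm_sq]; ring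

/-- Vectors orthogonal to a timelike vector are spacelike. -/
lemma mB_orth_nonneg {Q v : MV n} (hQ : mB Q Q = -1) (hQt : 0 < Q.2.2)
    (h1 : mB v Q = 0) : 0 ≤ mB v v := by
  have hQ' : ‖Q.1‖ ^ 2 + Q.2.1 ^ 2 - Q.2.2 ^ 2 = -1 := by rw [← mB_self_eq]; exact hQ
  have h1' : (inner ℝ v.1 Q.1 : ℝ) + v.2.1 * Q.2.1 = v.2.2 * Q.2.2 := by
    have : (inner ℝ v.1 Q.1 : ℝ) + v.2.1 * Q.2.1 - v.2.2 * Q.2.2 = 0 := h1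
    linarith
  have key := cs2 v.1 Q.1 v.2.1 Q.2.1
  rw [h1'] at key
  rw [mB_self_eq]
  nlinarith [sq_nonneg v.2.2, sq_nonneg (‖v.1‖ : ℝ), sq_nonneg v.2.1, norm_nonneg v.1, hQt]

lemma mB_orth_eq_zero {Q v : MV n} (hQ : mB Q Q = -1) (hQt : 0 < Q.2.2)
    (h1 : mB v Q = 0) (h2 : mB v v = 0) : v = 0 := by
  have hQ' : ‖Q.1‖ ^ 2 + Q.2.1 ^ 2 - Q.2.2 ^ 2 = -1 := by rw [← mB_self_eq]; exact hQ
  have h1' : (inner ℝ v.1 Q.1 : ℝ) + v.2.1 * Q.2.1 = v.2.2 * Q.2.2 := by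
    have : (inner ℝ v.1 Q.1 : ℝ) + v.2.1 * Q.2.1 - v.2.2 * Q.2.2 = 0 := h1
    linarith
  have key := cs2 v.1 Q.1 v.2.1 Q.2.1
  rw [h1'] at key
  have h2' : ‖v.1‖ ^ 2 + v.2.1 ^ 2 - v.2.2 ^ 2 = 0 := by rw [← mB_self_eq]; exact h2
  have hc2 : v.2.2 ^ 2 = 0 := by nlinarith [sq_nonneg v.2.2, hQt]
  have hc : v.2.2 = 0 := by
    have := sq_eq_zero_iff.mp hc2; exact this
  have hyb : ‖v.1‖ ^ 2 + v.2.1 ^ 2 = 0 := by rw [hc] at h2'; linarith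
  have hy : v.1 = 0 := by
    have : ‖v.1‖ ^ 2 = 0 := by nlinarith [sq_nonneg v.2.1, sq_nonneg (‖v.1‖ : ℝ)]
    exact norm_eq_zero.mp (by nlinarith [norm_nonneg v.1])
  have hb : v.2.1 = 0 := by
    have : v.2.1 ^ 2 = 0 := by nlinarith [sq_nonneg (‖v.1‖ : ℝ)]
    exact sq_eq_zero_iff.mp this
  exact Prod.ext hy (Prod.ext hb hc)


/-! ### Collinearity and consequences -/

lemma collinear_comb {A M B : Hyp n} {t L : ℝ} (ht0 : 0 ≤ t) (htL : t ≤ L)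
    (h1 : hdist A M = t) (h2 : hdist M B = L - t) (h3 : hdist A B = L) :
    Real.sinh (L - t) • Phi A + Real.sinh t • Phi B - Real.sinh L • Phi M = 0 := by
  have eAA := mB_Phi_self A
  have eMM := mB_Phi_self M
  have eBB := mB_Phi_self B
  have eAM : mB (Phi A) (Phi M) = -Real.cosh t := by rw [mB_Phi_cosh, h1]
  have eMB : mB (Phi M) (Phi B) = -Real.cosh (L - t) := by rw [mB_Phi_cosh, h2]
  have eAB : mB (Phi A) (Phi B) = -Real.cosh L := by rw [mB_Phi_cosh, h3]
  have eMA : mB (Phi M) (Phi A) = -Real.cosh t := by rw [mB_comm]; exact eAM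
  have eBM : mB (Phi B) (Phi M) = -Real.cosh (L - t) := by rw [mB_comm]; exact eMB
  have eBA : mB (Phi B) (Phi A) = -Real.cosh L := by rw [mB_comm]; exact eAB
  have hcL : Real.cosh L = Real.cosh (L - t) * Real.cosh t + Real.sinh (L - t) * Real.sinh t := by
    have := Real.cosh_add (L - t) t
    rw [sub_add_cancel] at this; exact this
  have hsL : Real.sinh L = Real.sinh (L - t) * Real.cosh t + Real.cosh (L - t) * Real.sinh t := by
    have := Real.sinh_add (L - t) t
    rw [sub_add_cancel] at this; exact this
  set V := Real.sinh (L - t) • Phi A + Real.sinh t • Phi B - Real.sinh L • Phi M with hV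
  have hVM : mB V (Phi M) = 0 := by
    rw [hV]
    simp only [mB_sub_left, mB_add_left, mB_smul_left, eAM, eMB, eMM, eBM]
    rw [hsL]; ring
  have hVV : mB V V = 0 := by
    rw [hV]
    simp only [mB_sub_left, mB_add_left, mB_smul_left, mB_sub_right, mB_add_right,
      mB_smul_right, eAA, eMM, eBB, eAM, eMB, eAB, eMA, eBM, eBA]
    rw [hcL, hsL]
    nlinarith [Real.cosh_sq_sub_sinh_sq (L - t), Real.cosh_sq_sub_sinh_sq t]
  exact mB_orth_eq_zero eMM (Phi_t_pos M) hVM hVV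

lemma Phi_diff (p : Hyp n) : (Phi p).2.2 - (Phi p).2.1 = (p.1.2)⁻¹ := by
  have h := (hh_pos p).ne'
  simp only [Phi]
  rw [div_sub_div_same]
  rw [show (‖p.1.1‖ ^ 2 + p.1.2 ^ 2 + 1) - (‖p.1.1‖ ^ 2 + p.1.2 ^ 2 - 1) = 2 by ring]
  rw [eq_comm, inv_eq_iff_eq_inv, inv_div]
  ring

lemma height_interp {A M B : Hyp n} {t L : ℝ} (ht0 : 0 ≤ t) (htL : t ≤ L)
    (h1 : hdist A M = t) (h2 : hdist M B = L - t) (h3 : hdist A B = L) :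
    Real.sinh (L - t) * (A.1.2)⁻¹ + Real.sinh t * (B.1.2)⁻¹
      = Real.sinh L * (M.1.2)⁻¹ := by
  have hc := collinear_comb ht0 htL h1 h2 h3
  have := congrArg (fun v : MV n => v.2.2 - v.2.1) hc
  simp only [Prod.snd_add, Prod.snd_sub, Prod.smul_snd, Prod.fst_add, Prod.fst_sub,
    Prod.smul_fst, smul_eq_mul, Prod.snd_zero, Prod.fst_zero] at this
  have h' : Real.sinh (L - t) * ((Phi A).2.2 - (Phi A).2.1)
      + Real.sinh t * ((Phi B).2.2 - (Phi B).2.1)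
      - Real.sinh L * ((Phi M).2.2 - (Phi M).2.1) = 0 := by linarith [this]
  rw [Phi_diff, Phi_diff, Phi_diff] at h'
  linarith

lemma height_convex {A M B : Hyp n} {t L : ℝ} (ht0 : 0 ≤ t) (htL : t ≤ L)
    (h1 : hdist A M = t) (h2 : hdist M B = L - t) (h3 : hdist A B = L)
    (hA : 1 ≤ A.1.2) (hB : 1 ≤ B.1.2) : 1 ≤ M.1.2 := by
  rcases eq_or_lt_of_le (le_trans ht0 htL) with hL0 | hL
  · -- L = 0, hence t = 0 and M = A
    have ht : t = 0 := le_antisymm (hL0 ▸ htL) ht0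
    have : hdist A M = 0 := by rw [h1, ht]
    have hMA := eq_of_hdist_eq_zero this
    rw [← hMA]; exact hA
  · have hi := height_interp ht0 htL h1 h2 h3
    have hsL : 0 < Real.sinh L := Real.sinh_pos_iff.mpr hL
    have hs1 : 0 ≤ Real.sinh (L - t) := Real.sinh_nonneg_iff.mpr (by linarith)
    have hs2 : 0 ≤ Real.sinh t := Real.sinh_nonneg_iff.mpr ht0
    have hMpos := hh_pos M
    have hApos := hh_pos A
    have hBpos := hh_pos B
    have hiA : (A.1.2)⁻¹ ≤ 1 := inv_le_one_of_one_le₀ hA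
    have hiB : (B.1.2)⁻¹ ≤ 1 := inv_le_one_of_one_le₀ hB
    have hsum : Real.sinh (L - t) + Real.sinh t ≤ Real.sinh L := by
      have := Real.sinh_add (L - t) t
      rw [sub_add_cancel] at this
      nlinarith [Real.one_le_cosh (L - t), Real.one_le_cosh t]
    have hMi : Real.sinh L * (M.1.2)⁻¹ ≤ Real.sinh L := by
      calc Real.sinh L * (M.1.2)⁻¹ = Real.sinh (L - t) * (A.1.2)⁻¹ + Real.sinh t * (B.1.2)⁻¹ :=
            hi.symm
        _ ≤ Real.sinh (L - t) * 1 + Real.sinh t * 1 := by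
            gcongr
        _ ≤ Real.sinh L := by rw [mul_one, mul_one]; exact hsum
    have hinv : (M.1.2)⁻¹ ≤ 1 := by
      by_contra hcon
      push_neg at hcon
      nlinarith
    have hmul : M.1.2 * (M.1.2)⁻¹ = 1 := mul_inv_cancel₀ hMpos.ne'
    nlinarith

lemma log_height_lipschitz (p q : Hyp n) :
    |Real.log p.1.2 - Real.log q.1.2| ≤ hdist p q := by
  have hp := hh_pos p
  have hq := hh_pos q
  have hlog : Real.log p.1.2 - Real.log q.1.2 = Real.log (p.1.2 / q.1.2) :=
    (Real.log_div hp.ne' hq.ne').symm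
  have hpq : 0 < p.1.2 / q.1.2 := by positivity
  have hcosh : Real.cosh (Real.log (p.1.2 / q.1.2)) = (p.1.2 / q.1.2 + q.1.2 / p.1.2) / 2 := by
    rw [Real.cosh_eq, Real.exp_log hpq, ← Real.log_inv, Real.exp_log (by positivity)]
    rw [inv_div]
  have hle : Real.cosh (Real.log (p.1.2 / q.1.2)) ≤ Real.cosh (hdist p q) := by
    rw [hcosh, cosh_hdist]
    have hkey : 1 + (dist p.1.1 q.1.1 ^ 2 + (p.1.2 - q.1.2) ^ 2) / (2 * p.1.2 * q.1.2)
        - (p.1.2 / q.1.2 + q.1.2 / p.1.2) / 2 = dist p.1.1 q.1.1 ^ 2 / (2 * p.1.2 * q.1.2) := by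
      field_simp
      ring
    have hpos : 0 ≤ dist p.1.1 q.1.1 ^ 2 / (2 * p.1.2 * q.1.2) := by positivity
    rw [K]
    linarith
  have habs := (Real.cosh_le_cosh.mp hle)
  rw [hlog]
  calc |Real.log (p.1.2 / q.1.2)| ≤ |hdist p q| := habs
    _ = hdist p q := abs_of_nonneg (hdist_nonneg p q)


/-! ### Triangle inequality -/

theorem hdist_triangle (p q r : Hyp n) : hdist p r ≤ hdist p q + hdist q r := by
  set d1 := hdist p q with hd1
  set d2 := hdist q r with hd2
  set a := Real.cosh d1 with ha
  set b := Real.cosh d2 with hb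
  set c := Real.cosh (hdist p r) with hc
  have eQQ := mB_Phi_self q
  have ePQ : mB (Phi p) (Phi q) = -a := mB_Phi_cosh p q
  have eQR : mB (Phi q) (Phi r) = -b := mB_Phi_cosh q r
  have ePR : mB (Phi p) (Phi r) = -c := mB_Phi_cosh p r
  have eQP : mB (Phi q) (Phi p) = -a := by rw [mB_comm]; exact ePQ
  have eRQ : mB (Phi r) (Phi q) = -b := by rw [mB_comm]; exact eQR
  set P' := Phi p - a • Phi q with hP'
  set R' := Phi r - b • Phi q with hR'
  have hPQ0 : mB P' (Phi q) = 0 := by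
    rw [hP', mB_sub_left, mB_smul_left, ePQ, eQQ]; ring
  have hRQ0 : mB R' (Phi q) = 0 := by
    rw [hR', mB_sub_left, mB_smul_left, eRQ, eQQ]; ring
  have hpp : mB P' P' = a ^ 2 - 1 := by
    rw [hP']
    simp only [mB_sub_left, mB_sub_right, mB_smul_left, mB_smul_right,
      mB_Phi_self, ePQ, eQP, eQQ]
    ring
  have hrr : mB R' R' = b ^ 2 - 1 := by
    rw [hR']
    simp only [mB_sub_left, mB_sub_right, mB_smul_left, mB_smul_right,
      mB_Phi_self, eQR, eRQ, eQQ]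
    ring
  have hpr : mB P' R' = a * b - c := by
    rw [hP', hR']
    simp only [mB_sub_left, mB_sub_right, mB_smul_left, mB_smul_right,
      mB_Phi_self, ePQ, eQP, eQR, eRQ, ePR, eQQ]
    ring
  have hquad : ∀ x : ℝ, 0 ≤ (b ^ 2 - 1) * x ^ 2 + (2 * (a * b - c)) * x + (a ^ 2 - 1) := by
    intro x
    have horth : mB (P' + x • R') (Phi q) = 0 := by
      rw [mB_add_left, mB_smul_left, hPQ0, hRQ0]; ring
    have hnn := mB_orth_nonneg eQQ (Phi_t_pos q) horth
    have hexp : mB (P' + x • R') (P' + x • R')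
        = (b ^ 2 - 1) * x ^ 2 + (2 * (a * b - c)) * x + (a ^ 2 - 1) := by
      simp only [mB_add_left, mB_add_right, mB_smul_left, mB_smul_right, hpp, hrr, hpr,
        mB_comm R' P', hpr]
      ring
    rw [hexp] at hnn
    exact hnn
  have hquad' : ∀ x : ℝ, 0 ≤ (b ^ 2 - 1) * (x * x) + (2 * (a * b - c)) * x + (a ^ 2 - 1) := by
    intro x
    have := hquad x
    nlinarith [this]
  have hdisc := discrim_le_zero hquad'
  rw [discrim] at hdisc
  have hkey : (a * b - c) ^ 2 ≤ (a ^ 2 - 1) * (b ^ 2 - 1) := by nlinarith [hdisc]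
  set s1 := Real.sinh d1 with hs1
  set s2 := Real.sinh d2 with hs2
  have hs1n : 0 ≤ s1 := Real.sinh_nonneg_iff.mpr (hdist_nonneg p q)
  have hs2n : 0 ≤ s2 := Real.sinh_nonneg_iff.mpr (hdist_nonneg q r)
  have hs1sq : s1 ^ 2 = a ^ 2 - 1 := by rw [hs1, ha, Real.sinh_sq]
  have hs2sq : s2 ^ 2 = b ^ 2 - 1 := by rw [hs2, hb, Real.sinh_sq]
  have hcle : c ≤ a * b + s1 * s2 := by
    nlinarith [hkey, mul_nonneg hs1n hs2n]
  have hcosh_sum : Real.cosh (d1 + d2) = a * b + s1 * s2 := Real.cosh_add d1 d2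
  have hfin : Real.cosh (hdist p r) ≤ Real.cosh (d1 + d2) := by
    rw [hcosh_sum, ← hc]; exact hcle
  have habs := Real.cosh_le_cosh.mp hfin
  have h1 : |hdist p r| = hdist p r := abs_of_nonneg (hdist_nonneg p r)
  have h2 : |d1 + d2| = d1 + d2 :=
    abs_of_nonneg (add_nonneg (hdist_nonneg p q) (hdist_nonneg q r))
  rw [h1, h2] at habs
  exact habs
end TC

namespace TC
open Set

section Quot
variable {n : ℕ} (Γ : Subgroup (Equiv.Perm (Hyp n))) (Mt : Set (Hyp n))

def Rel (x y : ↥Mt) : Prop := ∃ g ∈ Γ, g x.1 = y.1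

lemma rel_equiv : Equivalence (Rel Γ Mt) where
  refl x := ⟨1, Γ.one_mem, rfl⟩
  symm := by
    rintro x y ⟨g, hg, hxy⟩
    exact ⟨g⁻¹, Γ.inv_mem hg, by rw [← hxy]; exact Equiv.symm_apply_apply g x.1⟩
  trans := by
    rintro x y z ⟨g, hg, h1⟩ ⟨k, hk, h2⟩
    exact ⟨k * g, Γ.mul_mem hk hg, by rw [Equiv.Perm.mul_apply, h1, h2]⟩

lemma quot_mk_eq_iff (x y : ↥Mt) :
    (Quot.mk _ x : HQuot Γ Mt) = Quot.mk _ y ↔ Rel Γ Mt x y := by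
  rw [Quot.eq]
  exact (rel_equiv Γ Mt).eqvGen_iff

variable {Γ Mt}

lemma smul_mem (hinv : ∀ g ∈ Γ, g '' Mt = Mt) {g : Equiv.Perm (Hyp n)} (hg : g ∈ Γ)
    {p : Hyp n} (hp : p ∈ Mt) : g p ∈ Mt := by
  rw [← hinv g hg]; exact ⟨p, hp, rfl⟩

lemma hdist_g (hiso : Γ ≤ hIsomGrp n) {g : Equiv.Perm (Hyp n)} (hg : g ∈ Γ)
    (p q : Hyp n) : hdist (g p) (g q) = hdist p q := hiso hg p q

lemma qd_bddBelow (a b : HQuot Γ Mt) :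
    BddBelow {r : ℝ | ∃ x y : ↥Mt, Quot.mk _ x = a ∧ Quot.mk _ y = b ∧ hdist x.1 y.1 = r} := by
  refine ⟨0, ?_⟩
  rintro r ⟨x, y, -, -, rfl⟩
  exact hdist_nonneg x.1 y.1

lemma qd_le (x y : ↥Mt) :
    qd Γ Mt (Quot.mk _ x) (Quot.mk _ y) ≤ hdist x.1 y.1 := by
  apply csInf_le (qd_bddBelow _ _)
  exact ⟨x, y, rfl, rfl, rfl⟩

lemma qd_nonneg (a b : HQuot Γ Mt) : 0 ≤ qd Γ Mt a b := by
  apply Real.sInf_nonneg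
  rintro r ⟨x, y, -, -, rfl⟩
  exact hdist_nonneg x.1 y.1

lemma mem_qd_set_iff (hiso : Γ ≤ hIsomGrp n) (hinv : ∀ g ∈ Γ, g '' Mt = Mt)
    (x y : ↥Mt) (r : ℝ) :
    r ∈ {r : ℝ | ∃ x' y' : ↥Mt, Quot.mk _ x' = (Quot.mk _ x : HQuot Γ Mt) ∧
        Quot.mk _ y' = (Quot.mk _ y : HQuot Γ Mt) ∧ hdist x'.1 y'.1 = r}
      ↔ ∃ g ∈ Γ, hdist x.1 (g y.1) = r := by
  constructor
  · rintro ⟨x', y', hx', hy', rfl⟩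
    obtain ⟨g1, hg1, hgx⟩ := (quot_mk_eq_iff Γ Mt x' x).mp hx'
    obtain ⟨g2, hg2, hgy⟩ := (quot_mk_eq_iff Γ Mt y' y).mp hy'
    refine ⟨g1 * g2⁻¹, Γ.mul_mem hg1 (Γ.inv_mem hg2), ?_⟩
    have hy'' : g2⁻¹ y.1 = y'.1 := by rw [← hgy]; exact Equiv.symm_apply_apply g2 y'.1
    rw [Equiv.Perm.mul_apply, hy'', ← hgx, hdist_g hiso hg1]
  · rintro ⟨g, hg, rfl⟩
    refine ⟨x, ⟨g y.1, smul_mem hinv hg y.2⟩, rfl, ?_, rfl⟩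
    rw [quot_mk_eq_iff]
    exact ⟨g⁻¹, Γ.inv_mem hg, Equiv.symm_apply_apply g y.1⟩

/-- The infimum defining `qd` is attained. -/
lemma qd_attained (hiso : Γ ≤ hIsomGrp n)
    (hdisc : ∀ (x : Hyp n) (r : ℝ), {g : Γ | hdist x (g.1 x) ≤ r}.Finite)
    (hinv : ∀ g ∈ Γ, g '' Mt = Mt) (x y : ↥Mt) :
    ∃ z : ↥Mt, (Quot.mk _ z : HQuot Γ Mt) = Quot.mk _ y ∧
      qd Γ Mt (Quot.mk _ x) (Quot.mk _ y) = hdist x.1 z.1 := by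
  classical
  set S : Set ℝ := {r : ℝ | ∃ x' y' : ↥Mt, Quot.mk _ x' = (Quot.mk _ x : HQuot Γ Mt) ∧
      Quot.mk _ y' = (Quot.mk _ y : HQuot Γ Mt) ∧ hdist x'.1 y'.1 = r} with hS
  have hq : qd Γ Mt (Quot.mk _ x) (Quot.mk _ y) = sInf S := rfl
  set q := sInf S with hqdef
  have hSne : S.Nonempty := ⟨hdist x.1 y.1, x, y, rfl, rfl, rfl⟩
  have hSbdd : BddBelow S := qd_bddBelow _ _
  obtain ⟨r0, hr0S, hr0⟩ := (csInf_lt_iff hSbdd hSne).mp (by linarith : sInf S < q + 1)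
  obtain ⟨g0, hg0, hg0d⟩ := (mem_qd_set_iff hiso hinv x y r0).mp hr0S
  set T : Set ↥Γ := {g : ↥Γ | hdist x.1 (g.1 y.1) ≤ q + 1} with hT
  have hTfin : T.Finite := by
    apply Set.Finite.subset (hdisc y.1 (q + 1 + hdist y.1 x.1))
    intro g hgT
    rw [hT, Set.mem_setOf_eq] at hgT
    simp only [Set.mem_setOf_eq]
    calc hdist y.1 (g.1 y.1) ≤ hdist y.1 x.1 + hdist x.1 (g.1 y.1) := hdist_triangle _ _ _
      _ ≤ hdist y.1 x.1 + (q + 1) := by linarith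
      _ = q + 1 + hdist y.1 x.1 := by ring
  have hTne : T.Nonempty := ⟨⟨g0, hg0⟩, by simp only [hT, Set.mem_setOf_eq]; rw [hg0d]; linarith⟩
  obtain ⟨g1, hg1T, hg1min⟩ := Set.exists_min_image T (fun g => hdist x.1 (g.1 y.1)) hTfin hTne
  have hmem : hdist x.1 (g1.1 y.1) ∈ S :=
    (mem_qd_set_iff hiso hinv x y _).mpr ⟨g1.1, g1.2, rfl⟩
  have hle : q ≤ hdist x.1 (g1.1 y.1) := csInf_le hSbdd hmem
  have hge : hdist x.1 (g1.1 y.1) ≤ q := by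
    apply le_csInf hSne
    intro r hrS
    obtain ⟨g, hg, hgd⟩ := (mem_qd_set_iff hiso hinv x y r).mp hrS
    rcases le_or_gt r (q + 1) with hr | hr
    · have hmemT : (⟨g, hg⟩ : ↥Γ) ∈ T := by simp only [hT, Set.mem_setOf_eq]; rw [hgd]; exact hr
      have := hg1min ⟨g, hg⟩ hmemT
      simpa [hgd] using this
    · have hle0 : hdist x.1 (g1.1 y.1) ≤ r0 := by
        have hmemT : (⟨g0, hg0⟩ : ↥Γ) ∈ T := by
          simp only [hT, Set.mem_setOf_eq]; rw [hg0d]; linarith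
        have := hg1min ⟨g0, hg0⟩ hmemT
        simpa [hg0d] using this
      linarith
  refine ⟨⟨g1.1 y.1, smul_mem hinv g1.2 y.2⟩, ?_, by rw [hq]; exact le_antisymm hle hge⟩
  rw [quot_mk_eq_iff]
  exact ⟨g1.1⁻¹, Γ.inv_mem g1.2, Equiv.symm_apply_apply g1.1 y.1⟩

lemma qd_triangle (hiso : Γ ≤ hIsomGrp n)
    (hdisc : ∀ (x : Hyp n) (r : ℝ), {g : Γ | hdist x (g.1 x) ≤ r}.Finite)
    (hinv : ∀ g ∈ Γ, g '' Mt = Mt) (a b c : HQuot Γ Mt) :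
    qd Γ Mt a c ≤ qd Γ Mt a b + qd Γ Mt b c := by
  obtain ⟨x, rfl⟩ := Quot.exists_rep a
  obtain ⟨y, rfl⟩ := Quot.exists_rep b
  obtain ⟨w, rfl⟩ := Quot.exists_rep c
  obtain ⟨zb, hzb, hzbd⟩ := qd_attained hiso hdisc hinv x y
  obtain ⟨zc, hzc, hzcd⟩ := qd_attained hiso hdisc hinv zb w
  have h1 : qd Γ Mt (Quot.mk _ y) (Quot.mk _ w) = hdist zb.1 zc.1 := by rw [← hzb]; exact hzcd
  have h2 : qd Γ Mt (Quot.mk _ x) (Quot.mk _ w) ≤ hdist x.1 zc.1 := by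
    have h3 := qd_le (Γ := Γ) (Mt := Mt) x zc
    rwa [hzc] at h3
  calc qd Γ Mt (Quot.mk _ x) (Quot.mk _ w) ≤ hdist x.1 zc.1 := h2
    _ ≤ hdist x.1 zb.1 + hdist zb.1 zc.1 := hdist_triangle _ _ _
    _ = qd Γ Mt (Quot.mk _ x) (Quot.mk _ y) + qd Γ Mt (Quot.mk _ y) (Quot.mk _ w) := by
        rw [hzbd, h1]

lemma qd_symm (a b : HQuot Γ Mt) : qd Γ Mt a b = qd Γ Mt b a := by
  unfold qd
  congr 1
  ext r
  constructor
  · rintro ⟨x, y, hx, hy, rfl⟩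
    exact ⟨y, x, hy, hx, hdist_comm y.1 x.1⟩
  · rintro ⟨x, y, hx, hy, rfl⟩
    exact ⟨y, x, hy, hx, hdist_comm y.1 x.1⟩

end Quot
end TC


namespace TC
open Set

section Quot2
variable {n : ℕ} {Γ : Subgroup (Equiv.Perm (Hyp n))} {Mt : Set (Hyp n)}

lemma subset_mcl (A : Set (HQuot Γ Mt)) : A ⊆ mcl Γ Mt A := fun _ ha => Or.inl ha

lemma mcl_mono {A B : Set (HQuot Γ Mt)} (h : A ⊆ B) : mcl Γ Mt A ⊆ mcl Γ Mt B := by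
  rintro a (ha | ha)
  · exact Or.inl (h ha)
  · refine Or.inr fun ε hε => ?_
    obtain ⟨b, hbA, hb⟩ := ha ε hε
    exact ⟨b, h hbA, hb⟩

lemma mcl_union_subset (A B : Set (HQuot Γ Mt)) :
    mcl Γ Mt (A ∪ B) ⊆ mcl Γ Mt A ∪ mcl Γ Mt B := by
  rintro a (ha | ha)
  · rcases ha with h | h
    · exact Or.inl (Or.inl h)
    · exact Or.inr (Or.inl h)
  · by_cases hA : a ∈ mcl Γ Mt A
    · exact Or.inl hA
    · refine Or.inr (Or.inr fun ε hε => ?_)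
      simp only [mcl, Set.mem_union, Set.mem_setOf_eq, not_or] at hA
      obtain ⟨hA1, hA2⟩ := hA
      push_neg at hA2
      obtain ⟨ε', hε', hεA⟩ := hA2
      obtain ⟨b, hbAB, hb⟩ := ha (min ε ε') (lt_min hε hε')
      rcases hbAB with hbA | hbB
      · exact absurd (lt_of_lt_of_le hb (min_le_right _ _)) (not_lt.mpr (hεA b hbA))
      · exact ⟨b, hbB, lt_of_lt_of_le hb (min_le_left _ _)⟩

lemma mcl_idem (hiso : Γ ≤ hIsomGrp n)
    (hdisc : ∀ (x : Hyp n) (r : ℝ), {g : Γ | hdist x (g.1 x) ≤ r}.Finite)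
    (hinv : ∀ g ∈ Γ, g '' Mt = Mt) (A : Set (HQuot Γ Mt)) :
    mcl Γ Mt (mcl Γ Mt A) ⊆ mcl Γ Mt A := by
  rintro a (ha | ha)
  · exact ha
  · refine Or.inr fun ε hε => ?_
    obtain ⟨b, hbmcl, hb⟩ := ha (ε / 2) (by linarith)
    rcases hbmcl with hbA | hbA
    · exact ⟨b, hbA, lt_of_lt_of_le hb (by linarith)⟩
    · obtain ⟨c, hcA, hc⟩ := hbA (ε / 2) (by linarith)
      refine ⟨c, hcA, ?_⟩
      calc qd Γ Mt a c ≤ qd Γ Mt a b + qd Γ Mt b c := qd_triangle hiso hdisc hinv a b c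
        _ < ε := by linarith

lemma mem_cuspSet_iff (hinv : ∀ g ∈ Γ, g '' Mt = Mt) (x : ↥Mt) :
    (Quot.mk _ x : HQuot Γ Mt) ∈ cuspSet Γ Mt ↔ ∃ g ∈ Γ, 1 ≤ (g x.1).1.2 := by
  constructor
  · rintro ⟨y, hy1, hy2⟩
    obtain ⟨g, hg, hgy⟩ := (quot_mk_eq_iff Γ Mt y x).mp hy2
    refine ⟨g⁻¹, Γ.inv_mem hg, ?_⟩
    have h : g⁻¹ x.1 = y.1 := by rw [← hgy]; exact Equiv.symm_apply_apply g y.1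
    rw [h]; exact hy1
  · rintro ⟨g, hg, hgx⟩
    refine ⟨⟨g x.1, smul_mem hinv hg x.2⟩, hgx, ?_⟩
    erw [quot_mk_eq_iff]
    exact ⟨g⁻¹, Γ.inv_mem hg, Equiv.symm_apply_apply g x.1⟩

lemma mem_cuspBdry_iff (hinv : ∀ g ∈ Γ, g '' Mt = Mt) (x : ↥Mt) :
    (Quot.mk _ x : HQuot Γ Mt) ∈ cuspBdry Γ Mt ↔ ∃ g ∈ Γ, (g x.1).1.2 = 1 := by
  constructor
  · rintro ⟨y, hy1, hy2⟩
    obtain ⟨g, hg, hgy⟩ := (quot_mk_eq_iff Γ Mt y x).mp hy2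
    refine ⟨g⁻¹, Γ.inv_mem hg, ?_⟩
    have h : g⁻¹ x.1 = y.1 := by rw [← hgy]; exact Equiv.symm_apply_apply g y.1
    rw [h]; exact hy1
  · rintro ⟨g, hg, hgx⟩
    refine ⟨⟨g x.1, smul_mem hinv hg x.2⟩, hgx, ?_⟩
    erw [quot_mk_eq_iff]
    exact ⟨g⁻¹, Γ.inv_mem hg, Equiv.symm_apply_apply g x.1⟩

/-- A point of `mcl D ∩ C` lies on the cusp boundary. -/
lemma mclD_cusp_sub_bdry (hiso : Γ ≤ hIsomGrp n)
    (hdisc : ∀ (x : Hyp n) (r : ℝ), {g : Γ | hdist x (g.1 x) ≤ r}.Finite)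
    (hinv : ∀ g ∈ Γ, g '' Mt = Mt) {a : HQuot Γ Mt}
    (ha : a ∈ mcl Γ Mt (Set.univ \ cuspSet Γ Mt)) (hc : a ∈ cuspSet Γ Mt) :
    a ∈ cuspBdry Γ Mt := by
  have hc' := hc
  obtain ⟨y, hy1, hy2⟩ := hc'
  rcases ha with hD | hlim
  · exact absurd hc hD.2
  · refine ⟨y, ?_, hy2⟩
    have hle : y.1.1.2 ≤ 1 := by
      by_contra hgt
      push_neg at hgt
      set ε := Real.log y.1.1.2 with hε
      have hεpos : 0 < ε := Real.log_pos hgt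
      obtain ⟨b, hbD, hbε⟩ := hlim ε hεpos
      obtain ⟨w, rfl⟩ := Quot.exists_rep b
      have hay : a = Quot.mk _ y := hy2.symm
      obtain ⟨z, hz, hzd⟩ := qd_attained hiso hdisc hinv y w
      have hqd : qd Γ Mt a (Quot.mk _ w) = hdist y.1 z.1 := by rw [hay]; exact hzd
      have hznc : ¬ (1 ≤ z.1.1.2) := by
        intro h1
        exact hbD.2 ⟨z, h1, hz⟩
      push_neg at hznc
      have hlog : Real.log z.1.1.2 < 0 :=
        Real.log_neg (hh_pos z.1) hznc
      have hlip := log_height_lipschitz y.1 z.1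
      have : Real.log y.1.1.2 - Real.log z.1.1.2 ≤ hdist y.1 z.1 :=
        le_trans (le_abs_self _) hlip
      rw [← hqd] at this
      rw [hε] at hbε
      linarith
    exact le_antisymm hle hy1

end Quot2
end TC


namespace TC
open Set

section Quot3
variable {n : ℕ} {Γ : Subgroup (Equiv.Perm (Hyp n))} {Mt : Set (Hyp n)}

/-- A distance-realizing lift of a geodesic segment projects to a `qd`-geodesic. -/
lemma proj_geodesic (hiso : Γ ≤ hIsomGrp n)
    (hdisc : ∀ (x : Hyp n) (r : ℝ), {g : Γ | hdist x (g.1 x) ≤ r}.Finite)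
    (hinv : ∀ g ∈ Γ, g '' Mt = Mt)
    {x z : ↥Mt} {γ : ℝ → Hyp n} {L : ℝ}
    (hdxz : hdist x.1 z.1 = L)
    (hqdxz : qd Γ Mt (Quot.mk _ x) (Quot.mk _ z) = L)
    (hγ0 : γ 0 = x.1) (hγL : γ L = z.1)
    (hγm : ∀ u ∈ Icc (0:ℝ) L, ∀ v ∈ Icc (0:ℝ) L, hdist (γ u) (γ v) = |u - v|)
    (hγMt : ∀ t ∈ Icc (0:ℝ) L, γ t ∈ Mt) :
    ∀ u, ∀ hu : u ∈ Icc (0:ℝ) L, ∀ v, ∀ hv : v ∈ Icc (0:ℝ) L,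
      qd Γ Mt (Quot.mk _ (⟨γ u, hγMt u hu⟩ : ↥Mt)) (Quot.mk _ (⟨γ v, hγMt v hv⟩ : ↥Mt))
        = |u - v| := by
  have key : ∀ u, ∀ hu : u ∈ Icc (0:ℝ) L, ∀ v, ∀ hv : v ∈ Icc (0:ℝ) L, u ≤ v →
      qd Γ Mt (Quot.mk _ (⟨γ u, hγMt u hu⟩ : ↥Mt)) (Quot.mk _ (⟨γ v, hγMt v hv⟩ : ↥Mt))
        = v - u := by
    intro u hu v hv huv
    have h0L : (0:ℝ) ∈ Icc (0:ℝ) L := ⟨le_refl 0, le_trans hu.1 hu.2⟩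
    have hLL : L ∈ Icc (0:ℝ) L := ⟨le_trans hu.1 hu.2, le_refl L⟩
    have hub : qd Γ Mt (Quot.mk _ (⟨γ u, hγMt u hu⟩ : ↥Mt))
        (Quot.mk _ (⟨γ v, hγMt v hv⟩ : ↥Mt)) ≤ v - u := by
      have h := qd_le (Γ := Γ) (Mt := Mt) ⟨γ u, hγMt u hu⟩ ⟨γ v, hγMt v hv⟩
      rw [hγm u hu v hv, abs_of_nonpos (by linarith)] at h
      linarith
    have hx0 : (Quot.mk _ x : HQuot Γ Mt) = Quot.mk _ (⟨γ 0, hγMt 0 h0L⟩ : ↥Mt) := by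
      exact congrArg _ (Subtype.ext hγ0.symm)
    have hzL : (Quot.mk _ z : HQuot Γ Mt) = Quot.mk _ (⟨γ L, hγMt L hLL⟩ : ↥Mt) := by
      exact congrArg _ (Subtype.ext hγL.symm)
    have h1 : qd Γ Mt (Quot.mk _ x) (Quot.mk _ (⟨γ u, hγMt u hu⟩ : ↥Mt)) ≤ u := by
      rw [hx0]
      have h := qd_le (Γ := Γ) (Mt := Mt) ⟨γ 0, hγMt 0 h0L⟩ ⟨γ u, hγMt u hu⟩
      rw [hγm 0 h0L u hu, abs_of_nonpos (by linarith [hu.1])] at h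
      linarith
    have h2 : qd Γ Mt (Quot.mk _ (⟨γ v, hγMt v hv⟩ : ↥Mt)) (Quot.mk _ z) ≤ L - v := by
      rw [hzL]
      have h := qd_le (Γ := Γ) (Mt := Mt) ⟨γ v, hγMt v hv⟩ ⟨γ L, hγMt L hLL⟩
      rw [hγm v hv L hLL, abs_of_nonpos (by linarith [hv.2])] at h
      linarith
    have htri : L ≤ u + (qd Γ Mt (Quot.mk _ (⟨γ u, hγMt u hu⟩ : ↥Mt))
        (Quot.mk _ (⟨γ v, hγMt v hv⟩ : ↥Mt)) + (L - v)) := by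
      calc L = qd Γ Mt (Quot.mk _ x) (Quot.mk _ z) := hqdxz.symm
        _ ≤ qd Γ Mt (Quot.mk _ x) (Quot.mk _ (⟨γ u, hγMt u hu⟩ : ↥Mt))
            + qd Γ Mt (Quot.mk _ (⟨γ u, hγMt u hu⟩ : ↥Mt)) (Quot.mk _ z) :=
              qd_triangle hiso hdisc hinv _ _ _
        _ ≤ qd Γ Mt (Quot.mk _ x) (Quot.mk _ (⟨γ u, hγMt u hu⟩ : ↥Mt))
            + (qd Γ Mt (Quot.mk _ (⟨γ u, hγMt u hu⟩ : ↥Mt)) (Quot.mk _ (⟨γ v, hγMt v hv⟩ : ↥Mt))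
              + qd Γ Mt (Quot.mk _ (⟨γ v, hγMt v hv⟩ : ↥Mt)) (Quot.mk _ z)) := by
                have := qd_triangle hiso hdisc hinv
                  (Quot.mk _ (⟨γ u, hγMt u hu⟩ : ↥Mt)) (Quot.mk _ (⟨γ v, hγMt v hv⟩ : ↥Mt))
                  (Quot.mk _ z)
                linarith
        _ ≤ u + (qd Γ Mt (Quot.mk _ (⟨γ u, hγMt u hu⟩ : ↥Mt))
            (Quot.mk _ (⟨γ v, hγMt v hv⟩ : ↥Mt)) + (L - v)) := by linarith
    linarith [hub, htri]
  intro u hu v hv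
  rcases le_total u v with huv | hvu
  · rw [key u hu v hv huv, abs_of_nonpos (by linarith)]; ring
  · erw [qd_symm, key v hv u hu hvu, abs_of_nonneg (by linarith)]


end Quot3
end TC


namespace TC
open Set

section Main
variable {n : ℕ} {Γ : Subgroup (Equiv.Perm (Hyp n))} {Mt : Set (Hyp n)}

lemma dconvex_union (hiso : Γ ≤ hIsomGrp n)
    (hdisc : ∀ (x : Hyp n) (r : ℝ), {g : Γ | hdist x (g.1 x) ≤ r}.Finite)
    (hinv : ∀ g ∈ Γ, g '' Mt = Mt) (hconv : DConvex hdist Mt)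
    (hprec : ∀ g ∈ Γ, ¬ HeightPres g →
      Disjoint (g '' {p : Hyp n | 1 ≤ p.1.2}) {p : Hyp n | 1 ≤ p.1.2})
    {B₂ : Set (HQuot Γ Mt)} (hB1 : cuspBdry Γ Mt ⊆ B₂) (hB2 : DConvex (qd Γ Mt) B₂) :
    DConvex (qd Γ Mt) (mcl Γ Mt (Set.univ \ cuspSet Γ Mt) ∪ B₂) := by
  classical
  intro a ha b hb
  obtain ⟨x, rfl⟩ := Quot.exists_rep a
  obtain ⟨y, rfl⟩ := Quot.exists_rep b
  obtain ⟨z, hzy, hzd⟩ := qd_attained hiso hdisc hinv x y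
  set L := qd Γ Mt (Quot.mk _ x) (Quot.mk _ y) with hLdef
  have hL0 : 0 ≤ L := qd_nonneg _ _
  obtain ⟨s0, ⟨γ, hγ0, hγL', hγm', hγs⟩, hs0⟩ := hconv x.1 x.2 z.1 z.2
  have hdxz : hdist x.1 z.1 = L := hzd.symm
  rw [hdxz] at hγL' hγm' hγs
  have hγMt : ∀ t ∈ Icc (0:ℝ) L, γ t ∈ Mt := by
    intro t ht
    apply hs0
    rw [hγs]
    exact ⟨t, ht, rfl⟩
  have hqdxz : qd Γ Mt (Quot.mk _ x) (Quot.mk _ z) = L := by rw [hzy]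
  have hPgeo := proj_geodesic hiso hdisc hinv hdxz hqdxz hγ0 hγL' hγm' hγMt
  set P : ℝ → HQuot Γ Mt := fun s =>
    if h : s ∈ Icc (0:ℝ) L then Quot.mk _ (⟨γ s, hγMt s h⟩ : ↥Mt) else Quot.mk _ x
    with hPdef
  have hPeq : ∀ s, ∀ hs : s ∈ Icc (0:ℝ) L,
      P s = Quot.mk _ (⟨γ s, hγMt s hs⟩ : ↥Mt) := by
    intro s hs
    simp only [hPdef]
    erw [dif_pos hs]
  have h0Icc : (0:ℝ) ∈ Icc (0:ℝ) L := ⟨le_refl 0, hL0⟩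
  have hLIcc : L ∈ Icc (0:ℝ) L := ⟨hL0, le_refl L⟩
  have hP0 : P 0 = Quot.mk _ x := by
    rw [hPeq 0 h0Icc]
    exact congrArg _ (Subtype.ext hγ0)
  have hPL : P L = Quot.mk _ y := by
    rw [hPeq L hLIcc, ← hzy]
    exact congrArg _ (Subtype.ext hγL')
  have hPm : ∀ u ∈ Icc (0:ℝ) L, ∀ v ∈ Icc (0:ℝ) L, qd Γ Mt (P u) (P v) = |u - v| := by
    intro u hu v hv
    rw [hPeq u hu, hPeq v hv]
    exact hPgeo u hu v hv
  -- choose translates witnessing cusp membership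
  have hGex : ∀ t : ℝ, ∃ g : Equiv.Perm (Hyp n), g ∈ Γ ∧
      ((t ∈ Icc (0:ℝ) L ∧ ∃ g' ∈ Γ, 1 ≤ (g' (γ t)).1.2) → 1 ≤ (g (γ t)).1.2) := by
    intro t
    by_cases h : t ∈ Icc (0:ℝ) L ∧ ∃ g' ∈ Γ, 1 ≤ (g' (γ t)).1.2
    · obtain ⟨-, g', hg', hg'h⟩ := h
      exact ⟨g', hg', fun _ => hg'h⟩
    · exact ⟨1, Γ.one_mem, fun hc => absurd hc h⟩
  choose G hGmem hGh using hGex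
  set Bad : ℝ → Prop := fun t => t ∈ Icc (0:ℝ) L ∧ ∃ g' ∈ Γ, 1 ≤ (g' (γ t)).1.2 with hBadDef
  set I : ℝ → Set ℝ := fun t => {s | s ∈ Icc (0:ℝ) L ∧ 1 ≤ ((G t) (γ s)).1.2} with hIdef
  have hmemI : ∀ t, Bad t → t ∈ I t := fun t ht => ⟨ht.1, hGh t ht⟩
  -- convexity of the horoball interval
  have hIconv : ∀ t, ∀ s ∈ I t, ∀ r ∈ I t, ∀ m, s ≤ m → m ≤ r → m ∈ I t := by
    intro t s hs r hr m hsm hmr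
    have hmIcc : m ∈ Icc (0:ℝ) L := ⟨le_trans hs.1.1 hsm, le_trans hmr hr.1.2⟩
    refine ⟨hmIcc, ?_⟩
    have hAM : hdist ((G t) (γ s)) ((G t) (γ m)) = m - s := by
      rw [hdist_g hiso (hGmem t), hγm' s hs.1 m hmIcc, abs_of_nonpos (by linarith)]
      ring
    have hMB : hdist ((G t) (γ m)) ((G t) (γ r)) = (r - s) - (m - s) := by
      rw [hdist_g hiso (hGmem t), hγm' m hmIcc r hr.1, abs_of_nonpos (by linarith)]
      ring
    have hAB : hdist ((G t) (γ s)) ((G t) (γ r)) = r - s := by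
      rw [hdist_g hiso (hGmem t), hγm' s hs.1 r hr.1, abs_of_nonpos (by linarith)]
      ring
    exact height_convex (by linarith) (by linarith) hAM hMB hAB hs.2 hr.2
  -- Lipschitz bound for heights along γ
  have hWlip : ∀ t, ∀ u ∈ Icc (0:ℝ) L, ∀ v ∈ Icc (0:ℝ) L,
      |Real.log ((G t) (γ u)).1.2 - Real.log ((G t) (γ v)).1.2| ≤ |u - v| := by
    intro t u hu v hv
    calc |Real.log ((G t) (γ u)).1.2 - Real.log ((G t) (γ v)).1.2|
        ≤ hdist ((G t) (γ u)) ((G t) (γ v)) := log_height_lipschitz _ _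
      _ = |u - v| := by rw [hdist_g hiso (hGmem t), hγm' u hu v hv]
  set Af : ℝ → ℝ := fun t => sInf (I t) with hAfdef
  set Bf : ℝ → ℝ := fun t => sSup (I t) with hBfdef
  have hIbddB : ∀ t, BddBelow (I t) := fun t => ⟨0, fun s hs => hs.1.1⟩
  have hIbddA : ∀ t, BddAbove (I t) := fun t => ⟨L, fun s hs => hs.1.2⟩
  have hIne : ∀ t, Bad t → (I t).Nonempty := fun t ht => ⟨t, hmemI t ht⟩
  have one_le_of_log : ∀ p : Hyp n, 0 ≤ Real.log p.1.2 → 1 ≤ p.1.2 := by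
    intro p hp
    have h1 : (1:ℝ) = Real.exp 0 := (Real.exp_zero).symm
    have h2 : Real.exp (Real.log p.1.2) = p.1.2 := Real.exp_log (hh_pos p)
    rw [h1, ← h2]
    exact Real.exp_le_exp.mpr hp
  have hAmem : ∀ t, Bad t → Af t ∈ I t := by
    intro t ht
    have hIccA : Af t ∈ Icc (0:ℝ) L := by
      constructor
      · exact le_csInf (hIne t ht) (fun s hs => hs.1.1)
      · exact le_trans (csInf_le (hIbddB t) (hmemI t ht)) ht.1.2
    refine ⟨hIccA, ?_⟩
    apply one_le_of_log
    by_contra hneg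
    push_neg at hneg
    set ε := -Real.log ((G t) (γ (Af t))).1.2 with hεdef
    have hεpos : 0 < ε := by simp only [hεdef]; linarith
    obtain ⟨s, hsI, hs⟩ := (csInf_lt_iff (hIbddB t) (hIne t ht)).mp
      (by linarith : sInf (I t) < Af t + ε)
    have h1 : 0 ≤ Real.log ((G t) (γ s)).1.2 := Real.log_nonneg hsI.2
    have h2 := hWlip t (Af t) hIccA s hsI.1
    have h3 : Af t ≤ s := csInf_le (hIbddB t) hsI
    have h4 : |Af t - s| < ε := by rw [abs_of_nonpos (by linarith)]; linarith
    have h5 := (abs_lt.mp (lt_of_le_of_lt h2 h4)).1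
    simp only [hεdef] at h5 hεpos
    linarith
  have hBmem : ∀ t, Bad t → Bf t ∈ I t := by
    intro t ht
    have hIccB : Bf t ∈ Icc (0:ℝ) L := by
      constructor
      · exact le_trans ht.1.1 (le_csSup (hIbddA t) (hmemI t ht))
      · exact csSup_le (hIne t ht) (fun s hs => hs.1.2)
    refine ⟨hIccB, ?_⟩
    apply one_le_of_log
    by_contra hneg
    push_neg at hneg
    set ε := -Real.log ((G t) (γ (Bf t))).1.2 with hεdef
    have hεpos : 0 < ε := by simp only [hεdef]; linarith
    obtain ⟨s, hsI, hs⟩ := (lt_csSup_iff (hIbddA t) (hIne t ht)).mp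
      (by linarith : Bf t - ε < sSup (I t))
    have h1 : 0 ≤ Real.log ((G t) (γ s)).1.2 := Real.log_nonneg hsI.2
    have h2 := hWlip t (Bf t) hIccB s hsI.1
    have h3 : s ≤ Bf t := le_csSup (hIbddA t) hsI
    have h4 : |Bf t - s| < ε := by rw [abs_of_nonneg (by linarith)]; linarith
    have h5 := (abs_lt.mp (lt_of_le_of_lt h2 h4)).1
    simp only [hεdef] at h5 hεpos
    linarith
  have hAle : ∀ t, Bad t → Af t ≤ t := fun t ht => csInf_le (hIbddB t) (hmemI t ht)
  have hBge : ∀ t, Bad t → t ≤ Bf t := fun t ht => le_csSup (hIbddA t) (hmemI t ht)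
  have hIeq : ∀ t, Bad t → I t = Icc (Af t) (Bf t) := by
    intro t ht
    apply Set.eq_of_subset_of_subset
    · intro s hs
      exact ⟨csInf_le (hIbddB t) hs, le_csSup (hIbddA t) hs⟩
    · intro s hs
      exact hIconv t _ (hAmem t ht) _ (hBmem t ht) s hs.1 hs.2
  -- equal or disjoint
  have hIdisj : ∀ u v, Bad u → Bad v → (∃ s, s ∈ I u ∧ s ∈ I v) → I u = I v := by
    rintro u v hu hv ⟨s, hsu, hsv⟩
    set k := G v * (G u)⁻¹ with hkdef
    have hkΓ : k ∈ Γ := Γ.mul_mem (hGmem v) (Γ.inv_mem (hGmem u))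
    have hkapp : ∀ p : Hyp n, k ((G u) p) = (G v) p := by
      intro p
      simp only [hkdef, Equiv.Perm.mul_apply, Equiv.Perm.inv_def, Equiv.symm_apply_apply]
    by_cases hkH : HeightPres k
    · have hsame : ∀ p : Hyp n, ((G v) p).1.2 = ((G u) p).1.2 := by
        intro p
        rw [← hkapp p]
        exact hkH ((G u) p)
      simp only [hIdef]
      ext s'
      simp only [Set.mem_setOf_eq, hsame]
    · exfalso
      have hd := hprec k hkΓ hkH
      have hp1 : (G u) (γ s) ∈ {p : Hyp n | 1 ≤ p.1.2} := hsu.2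
      have hp2 : k ((G u) (γ s)) ∈ {p : Hyp n | 1 ≤ p.1.2} := by
        rw [hkapp]
        exact hsv.2
      exact Set.disjoint_left.mp hd ⟨(G u) (γ s), hp1, rfl⟩ hp2
  -- chunk endpoints lie in B₂
  have hendA : ∀ t, Bad t → P (Af t) ∈ B₂ := by
    intro t ht
    have hA := hAmem t ht
    rcases eq_or_lt_of_le hA.1.1 with h0 | h0
    · -- Af t = 0
      rw [← h0, hP0]
      rcases ha with haD | haB
      · have h0I : (0:ℝ) ∈ I t := by rw [h0]; exact hA
        have hcusp : (Quot.mk _ x : HQuot Γ Mt) ∈ cuspSet Γ Mt := by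
          rw [mem_cuspSet_iff hinv]
          refine ⟨G t, hGmem t, ?_⟩
          rw [← hγ0]
          exact h0I.2
        exact hB1 (mclD_cusp_sub_bdry hiso hdisc hinv haD hcusp)
      · exact haB
    · have h1 : ((G t) (γ (Af t))).1.2 = 1 := by
        refine le_antisymm ?_ hA.2
        by_contra hgt
        push_neg at hgt
        set w0 := Real.log ((G t) (γ (Af t))).1.2 with hw0def
        have hw0p : 0 < w0 := Real.log_pos hgt
        set m := min (Af t) w0 with hmdef
        have hmp : 0 < m := lt_min h0 hw0p
        have hmA : m ≤ Af t := min_le_left _ _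
        have hmw : m ≤ w0 := min_le_right _ _
        set s := Af t - m / 2 with hsdef
        have hsIcc : s ∈ Icc (0:ℝ) L := ⟨by simp only [hsdef]; linarith,
          by simp only [hsdef]; linarith [hA.1.2]⟩
        have hlip := hWlip t (Af t) hA.1 s hsIcc
        have habs : |Af t - s| = m / 2 := by
          rw [abs_of_nonneg (by simp only [hsdef]; linarith)]
          simp only [hsdef]; ring
        rw [habs] at hlip
        have hws : 0 ≤ Real.log ((G t) (γ s)).1.2 := by
          have h5 := (abs_le.mp hlip).2
          simp only [← hw0def] at h5
          linarith
        have hsI : s ∈ I t := ⟨hsIcc, one_le_of_log _ hws⟩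
        have := csInf_le (hIbddB t) hsI
        simp only [hsdef] at this
        have hAfeq : Af t ≤ Af t - m / 2 := this
        linarith
      have hbd : P (Af t) ∈ cuspBdry Γ Mt := by
        erw [hPeq (Af t) hA.1, mem_cuspBdry_iff hinv]
        exact ⟨G t, hGmem t, h1⟩
      exact hB1 hbd
  have hendB : ∀ t, Bad t → P (Bf t) ∈ B₂ := by
    intro t ht
    have hB := hBmem t ht
    rcases eq_or_lt_of_le hB.1.2 with hLc | hLc
    · -- Bf t = L
      rw [hLc, hPL]
      rcases hb with hbD | hbB
      · have hLI : L ∈ I t := by rw [← hLc]; exact hB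
        have hcusp : (Quot.mk _ y : HQuot Γ Mt) ∈ cuspSet Γ Mt := by
          rw [← hzy, mem_cuspSet_iff hinv]
          refine ⟨G t, hGmem t, ?_⟩
          rw [← hγL']
          exact hLI.2
        exact hB1 (mclD_cusp_sub_bdry hiso hdisc hinv hbD hcusp)
      · exact hbB
    · have h1 : ((G t) (γ (Bf t))).1.2 = 1 := by
        refine le_antisymm ?_ hB.2
        by_contra hgt
        push_neg at hgt
        set w0 := Real.log ((G t) (γ (Bf t))).1.2 with hw0def
        have hw0p : 0 < w0 := Real.log_pos hgt
        set m := min (L - Bf t) w0 with hmdef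
        have hmp : 0 < m := lt_min (by linarith) hw0p
        have hmA : m ≤ L - Bf t := min_le_left _ _
        have hmw : m ≤ w0 := min_le_right _ _
        set s := Bf t + m / 2 with hsdef
        have hsIcc : s ∈ Icc (0:ℝ) L := ⟨by simp only [hsdef]; linarith [hB.1.1],
          by simp only [hsdef]; linarith⟩
        have hlip := hWlip t (Bf t) hB.1 s hsIcc
        have habs : |Bf t - s| = m / 2 := by
          rw [abs_of_nonpos (by simp only [hsdef]; linarith)]
          simp only [hsdef]; ring
        rw [habs] at hlip
        have hws : 0 ≤ Real.log ((G t) (γ s)).1.2 := by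
          have h5 := (abs_le.mp hlip).2
          simp only [← hw0def] at h5
          linarith
        have hsI : s ∈ I t := ⟨hsIcc, one_le_of_log _ hws⟩
        have := le_csSup (hIbddA t) hsI
        simp only [hsdef] at this
        linarith
      have hbd : P (Bf t) ∈ cuspBdry Γ Mt := by
        erw [hPeq (Bf t) hB.1, mem_cuspBdry_iff hinv]
        exact ⟨G t, hGmem t, h1⟩
      exact hB1 hbd
  have hABle : ∀ t, Bad t → Af t ≤ Bf t := fun t ht => le_trans (hAle t ht) (hBge t ht)
  -- choose segments within B₂ for each chunk
  set SegOK : ℝ → ℝ → (ℝ → HQuot Γ Mt) → Prop := fun α β δ =>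
    δ 0 = P α ∧ δ (β - α) = P β ∧
    (∀ u ∈ Icc (0:ℝ) (β - α), ∀ v ∈ Icc (0:ℝ) (β - α), qd Γ Mt (δ u) (δ v) = |u - v|) ∧
    (∀ r ∈ Icc (0:ℝ) (β - α), δ r ∈ B₂) with hSegOKdef
  set Δ : ℝ → ℝ → (ℝ → HQuot Γ Mt) := fun α β =>
    if h : ∃ δ, SegOK α β δ then Classical.choose h else fun _ => Quot.mk _ x with hΔdef
  have hΔspec : ∀ α β, (∃ δ, SegOK α β δ) → SegOK α β (Δ α β) := by
    intro α β h
    simp only [hΔdef]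
    erw [dif_pos h]
    exact Classical.choose_spec h
  have hSegEx : ∀ t, Bad t → SegOK (Af t) (Bf t) (Δ (Af t) (Bf t)) := by
    intro t ht
    apply hΔspec
    obtain ⟨s', ⟨δ, hδ0, hδd, hδm, hδs⟩, hsB⟩ := hB2 (P (Af t)) (hendA t ht) (P (Bf t)) (hendB t ht)
    have hq : qd Γ Mt (P (Af t)) (P (Bf t)) = Bf t - Af t := by
      rw [hPm (Af t) (hAmem t ht).1 (Bf t) (hBmem t ht).1,
        abs_of_nonpos (by linarith [hABle t ht])]
      ring
    rw [hq] at hδd hδm hδs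
    refine ⟨δ, hδ0, hδd, hδm, ?_⟩
    intro r hr
    apply hsB
    rw [hδs]
    exact ⟨r, hr, rfl⟩
  -- the rerouted path
  set γq : ℝ → HQuot Γ Mt := fun t =>
    if h : Bad t then Δ (Af t) (Bf t) (t - Af t) else P t with hγqdef
  have hγqBad : ∀ t, Bad t → γq t = Δ (Af t) (Bf t) (t - Af t) := by
    intro t ht
    simp only [hγqdef]
    rw [dif_pos ht]
  have hγqGood : ∀ t, ¬ Bad t → γq t = P t := by
    intro t ht
    simp only [hγqdef]
    rw [dif_neg ht]
  have hnotI : ∀ t u, Bad t → u ∈ Icc (0:ℝ) L → ¬ Bad u → u ∉ I t := by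
    intro t u ht hu hnb huI
    exact hnb ⟨hu, G t, hGmem t, huI.2⟩
  -- membership of shifted parameters
  have hshift : ∀ t, Bad t → t - Af t ∈ Icc (0:ℝ) (Bf t - Af t) := by
    intro t ht
    exact ⟨by linarith [hAle t ht], by linarith [hBge t ht]⟩
  have hshift0 : ∀ t, Bad t → (0:ℝ) ∈ Icc (0:ℝ) (Bf t - Af t) := by
    intro t ht
    exact ⟨le_refl 0, by linarith [hABle t ht]⟩
  have hshiftL : ∀ t, Bad t → Bf t - Af t ∈ Icc (0:ℝ) (Bf t - Af t) := by
    intro t ht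
    exact ⟨by linarith [hABle t ht], le_refl _⟩
  -- main metric estimate, ordered version
  have hmain : ∀ u, u ∈ Icc (0:ℝ) L → ∀ v, v ∈ Icc (0:ℝ) L → u ≤ v →
      qd Γ Mt (γq u) (γq v) = v - u := by
    intro u hu v hv huv
    by_cases hbu : Bad u <;> by_cases hbv : Bad v
    · -- both bad
      by_cases hIuv : I u = I v
      · have hAe : Af u = Af v := by simp only [hAfdef]; rw [hIuv]
        have hBe : Bf u = Bf v := by simp only [hBfdef]; rw [hIuv]
        rw [hγqBad u hbu, hγqBad v hbv, hAe, hBe]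
        obtain ⟨-, -, hm, -⟩ := hSegEx v hbv
        have h1 := hm (u - Af v) (by rw [← hAe, ← hBe]; exact hshift u hbu) (v - Af v) (hshift v hbv)
        rw [h1, abs_of_nonpos (by linarith)]
        ring
      · -- disjoint chunks : Bf u < Af v
        have hdisj : Bf u < Af v := by
          by_contra hle
          push_neg at hle
          apply hIuv
          apply hIdisj u v hbu hbv
          refine ⟨max (Af u) (Af v), ?_, ?_⟩
          · rw [hIeq u hbu]
            refine ⟨le_max_left _ _, max_le (hABle u hbu) hle⟩
          · rw [hIeq v hbv]
            refine ⟨le_max_right _ _, max_le ?_ (hABle v hbv)⟩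
            calc Af u ≤ u := hAle u hbu
              _ ≤ v := huv
              _ ≤ Bf v := hBge v hbv
        obtain ⟨hu0, huL, hum, huB⟩ := hSegEx u hbu
        obtain ⟨hv0, hvL, hvm, hvB⟩ := hSegEx v hbv
        have hBuIcc := (hBmem u hbu).1
        have hAvIcc := (hAmem v hbv).1
        have hAuIcc := (hAmem u hbu).1
        have hBvIcc := (hBmem v hbv).1
        have e1 : qd Γ Mt (γq u) (P (Bf u)) = Bf u - u := by
          rw [hγqBad u hbu, ← huL]
          rw [hum (u - Af u) (hshift u hbu) (Bf u - Af u) (hshiftL u hbu),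
            abs_of_nonpos (by linarith [hBge u hbu])]
          ring
        have e2 : qd Γ Mt (P (Af v)) (γq v) = v - Af v := by
          rw [hγqBad v hbv, ← hv0]
          rw [hvm 0 (hshift0 v hbv) (v - Af v) (hshift v hbv),
            abs_of_nonpos (by linarith [hAle v hbv])]
          ring
        have e3 : qd Γ Mt (P (Bf u)) (P (Af v)) = Af v - Bf u := by
          rw [hPm (Bf u) hBuIcc (Af v) hAvIcc, abs_of_nonpos (by linarith)]
          ring
        have hub : qd Γ Mt (γq u) (γq v) ≤ v - u := by
          calc qd Γ Mt (γq u) (γq v)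
              ≤ qd Γ Mt (γq u) (P (Bf u)) + qd Γ Mt (P (Bf u)) (γq v) :=
                qd_triangle hiso hdisc hinv _ _ _
            _ ≤ qd Γ Mt (γq u) (P (Bf u)) +
                (qd Γ Mt (P (Bf u)) (P (Af v)) + qd Γ Mt (P (Af v)) (γq v)) := by
                  linarith [qd_triangle hiso hdisc hinv (P (Bf u)) (P (Af v)) (γq v)]
            _ = v - u := by
                rw [e1, e2, e3]
                linarith [hBge u hbu, hAle v hbv]
        have f1 : qd Γ Mt (P (Af u)) (γq u) = u - Af u := by
          rw [hγqBad u hbu, ← hu0]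
          rw [hum 0 (hshift0 u hbu) (u - Af u) (hshift u hbu),
            abs_of_nonpos (by linarith [hAle u hbu])]
          ring
        have f2 : qd Γ Mt (γq v) (P (Bf v)) = Bf v - v := by
          rw [hγqBad v hbv, ← hvL]
          rw [hvm (v - Af v) (hshift v hbv) (Bf v - Af v) (hshiftL v hbv),
            abs_of_nonpos (by linarith [hBge v hbv])]
          ring
        have f3 : qd Γ Mt (P (Af u)) (P (Bf v)) = Bf v - Af u := by
          rw [hPm (Af u) hAuIcc (Bf v) hBvIcc, abs_of_nonpos (by
            linarith [hAle u hbu, hBge v hbv])]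
          ring
        have hlb : v - u ≤ qd Γ Mt (γq u) (γq v) := by
          have t1 := qd_triangle hiso hdisc hinv (P (Af u)) (γq u) (P (Bf v))
          have t2 := qd_triangle hiso hdisc hinv (γq u) (γq v) (P (Bf v))
          rw [f1, f3] at t1
          rw [f2] at t2
          linarith
        linarith
    · -- u bad, v good : v > Bf u
      have hvnotI := hnotI u v hbu hv hbv
      have hvgt : Bf u < v := by
        by_contra hle
        push_neg at hle
        apply hvnotI
        rw [hIeq u hbu]
        exact ⟨le_trans (hAle u hbu) huv, hle⟩
      obtain ⟨hu0, huL, hum, huB⟩ := hSegEx u hbu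
      have hBuIcc := (hBmem u hbu).1
      have hAuIcc := (hAmem u hbu).1
      have e1 : qd Γ Mt (γq u) (P (Bf u)) = Bf u - u := by
        rw [hγqBad u hbu, ← huL]
        rw [hum (u - Af u) (hshift u hbu) (Bf u - Af u) (hshiftL u hbu),
          abs_of_nonpos (by linarith [hBge u hbu])]
        ring
      have e2 : qd Γ Mt (P (Bf u)) (γq v) = v - Bf u := by
        rw [hγqGood v hbv]
        rw [hPm (Bf u) hBuIcc v hv, abs_of_nonpos (by linarith)]
        ring
      have f1 : qd Γ Mt (P (Af u)) (γq u) = u - Af u := by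
        rw [hγqBad u hbu, ← hu0]
        rw [hum 0 (hshift0 u hbu) (u - Af u) (hshift u hbu),
          abs_of_nonpos (by linarith [hAle u hbu])]
        ring
      have f2 : qd Γ Mt (P (Af u)) (γq v) = v - Af u := by
        rw [hγqGood v hbv]
        rw [hPm (Af u) hAuIcc v hv, abs_of_nonpos (by linarith [hAle u hbu])]
        ring
      have hub : qd Γ Mt (γq u) (γq v) ≤ v - u := by
        have t1 := qd_triangle hiso hdisc hinv (γq u) (P (Bf u)) (γq v)
        rw [e1, e2] at t1
        linarith
      have hlb : v - u ≤ qd Γ Mt (γq u) (γq v) := by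
        have t1 := qd_triangle hiso hdisc hinv (P (Af u)) (γq u) (γq v)
        rw [f1, f2] at t1
        linarith
      linarith
    · -- u good, v bad : u < Af v
      have hunotI := hnotI v u hbv hu hbu
      have hult : u < Af v := by
        by_contra hle
        push_neg at hle
        apply hunotI
        rw [hIeq v hbv]
        exact ⟨hle, le_trans huv (hBge v hbv)⟩
      obtain ⟨hv0, hvL, hvm, hvB⟩ := hSegEx v hbv
      have hAvIcc := (hAmem v hbv).1
      have hBvIcc := (hBmem v hbv).1
      have e1 : qd Γ Mt (γq u) (P (Af v)) = Af v - u := by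
        rw [hγqGood u hbu]
        rw [hPm u hu (Af v) hAvIcc, abs_of_nonpos (by linarith)]
        ring
      have e2 : qd Γ Mt (P (Af v)) (γq v) = v - Af v := by
        rw [hγqBad v hbv, ← hv0]
        rw [hvm 0 (hshift0 v hbv) (v - Af v) (hshift v hbv),
          abs_of_nonpos (by linarith [hAle v hbv])]
        ring
      have f1 : qd Γ Mt (γq v) (P (Bf v)) = Bf v - v := by
        rw [hγqBad v hbv, ← hvL]
        rw [hvm (v - Af v) (hshift v hbv) (Bf v - Af v) (hshiftL v hbv),
          abs_of_nonpos (by linarith [hBge v hbv])]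
        ring
      have f2 : qd Γ Mt (γq u) (P (Bf v)) = Bf v - u := by
        rw [hγqGood u hbu]
        rw [hPm u hu (Bf v) hBvIcc, abs_of_nonpos (by linarith [hBge v hbv])]
        ring
      have hub : qd Γ Mt (γq u) (γq v) ≤ v - u := by
        have t1 := qd_triangle hiso hdisc hinv (γq u) (P (Af v)) (γq v)
        rw [e1, e2] at t1
        linarith
      have hlb : v - u ≤ qd Γ Mt (γq u) (γq v) := by
        have t1 := qd_triangle hiso hdisc hinv (γq u) (γq v) (P (Bf v))
        rw [f1, f2] at t1
        linarith
      linarith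
    · -- both good
      rw [hγqGood u hbu, hγqGood v hbv, hPm u hu v hv, abs_of_nonpos (by linarith)]
      ring
  -- symmetric version
  have hγqm : ∀ u ∈ Icc (0:ℝ) L, ∀ v ∈ Icc (0:ℝ) L,
      qd Γ Mt (γq u) (γq v) = |u - v| := by
    intro u hu v hv
    rcases le_total u v with huv | hvu
    · rw [hmain u hu v hv huv, abs_of_nonpos (by linarith)]; ring
    · rw [qd_symm, hmain v hv u hu hvu, abs_of_nonneg (by linarith)]
  -- endpoints
  have hγq0 : γq 0 = Quot.mk _ x := by
    by_cases hb0 : Bad 0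
    · have hAf0 : Af 0 = 0 := le_antisymm (hAle 0 hb0) (hAmem 0 hb0).1.1
      obtain ⟨h0, -, -, -⟩ := hSegEx 0 hb0
      rw [hγqBad 0 hb0]
      rw [show (0:ℝ) - Af 0 = 0 by rw [hAf0]; ring]
      rw [h0, hAf0, hP0]
    · rw [hγqGood 0 hb0, hP0]
  have hγqL : γq L = Quot.mk _ y := by
    by_cases hbL : Bad L
    · have hBfL : Bf L = L := le_antisymm (hBmem L hbL).1.2 (hBge L hbL)
      obtain ⟨-, hL', -, -⟩ := hSegEx L hbL
      rw [hγqBad L hbL]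
      rw [show L - Af L = Bf L - Af L by rw [hBfL]]
      rw [hL', hBfL, hPL]
    · rw [hγqGood L hbL, hPL]
  -- image
  have himg : ∀ t ∈ Icc (0:ℝ) L, γq t ∈ mcl Γ Mt (Set.univ \ cuspSet Γ Mt) ∪ B₂ := by
    intro t ht
    by_cases hbt : Bad t
    · right
      rw [hγqBad t hbt]
      obtain ⟨-, -, -, hB⟩ := hSegEx t hbt
      exact hB (t - Af t) (hshift t hbt)
    · left
      apply subset_mcl
      refine ⟨trivial, ?_⟩
      intro hcusp
      rw [hγqGood t hbt, hPeq t ht] at hcusp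
      erw [mem_cuspSet_iff hinv] at hcusp
      obtain ⟨g, hg, hgh⟩ := hcusp
      exact hbt ⟨ht, g, hg, hgh⟩
  -- assemble
  refine ⟨γq '' Icc (0:ℝ) L, ⟨γq, hγq0, ?_, ?_, rfl⟩, ?_⟩
  · rw [← hLdef]; exact hγqL
  · rw [← hLdef]; exact hγqm
  · rintro w ⟨t, ht, rfl⟩
    exact himg t ht

end Main
end TC


/-- **Thinning cusps.**  Suppose `M = M̃/Γ` is a convex hyperbolic manifold and `C` is
a cusp of `M` (at `∞`, the horoball being precisely invariant under the nontrivial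
parabolic stabilizer) with `∂_cC ⊆ closure(M \ C)`.  Then
`CH(closure(M \ C)) = closure(M \ C) ∪ CH(∂_cC)`, where `CH` denotes convex hull
taken inside `M`. -/
theorem thinning_cusps {n : ℕ} (Γ : Subgroup (Equiv.Perm (Hyp n)))
    (hiso : Γ ≤ hIsomGrp n)
    (hdisc : ∀ (x : Hyp n) (r : ℝ), {g : Γ | hdist x (g.1 x) ≤ r}.Finite)
    (hfree : ∀ g ∈ Γ, g ≠ 1 → ∀ p : Hyp n, g p ≠ p)
    (Mt : Set (Hyp n)) (hconv : DConvex hdist Mt)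
    (hinv : ∀ g ∈ Γ, g '' Mt = Mt)
    (hprec : ∀ g ∈ Γ, ¬ HeightPres g →
      Disjoint (g '' {p : Hyp n | 1 ≤ p.1.2}) {p : Hyp n | 1 ≤ p.1.2})
    (hpar : ∃ g ∈ Γ, HeightPres g ∧ g ≠ 1)
    (hsub : cuspBdry Γ Mt ⊆ mcl Γ Mt (Set.univ \ cuspSet Γ Mt)) :
    qHull Γ Mt (mcl Γ Mt (Set.univ \ cuspSet Γ Mt)) =
      mcl Γ Mt (Set.univ \ cuspSet Γ Mt) ∪ qHull Γ Mt (cuspBdry Γ Mt) := by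
  classical
  apply Set.eq_of_subset_of_subset
  · -- hull of the thick part is contained in the union
    intro w hw
    by_cases hwD : w ∈ mcl Γ Mt (Set.univ \ cuspSet Γ Mt)
    · exact Or.inl hwD
    · refine Or.inr ?_
      simp only [qHull, Set.mem_sInter, Set.mem_setOf_eq]
      intro B₂ hB₂
      obtain ⟨hB₂1, hB₂2, hB₂3⟩ := hB₂
      have hmem : mcl Γ Mt (Set.univ \ cuspSet Γ Mt) ∪ B₂ ∈
          {B | mcl Γ Mt (Set.univ \ cuspSet Γ Mt) ⊆ B ∧ DConvex (qd Γ Mt) B ∧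
            mcl Γ Mt B ⊆ B} := by
        refine ⟨Set.subset_union_left, ?_, ?_⟩
        · exact TC.dconvex_union hiso hdisc hinv hconv hprec hB₂1 hB₂2
        · intro p hp
          rcases TC.mcl_union_subset _ _ hp with h | h
          · exact Or.inl (TC.mcl_idem hiso hdisc hinv _ h)
          · exact Or.inr (hB₂3 h)
      have hw' := (Set.mem_sInter.mp hw) _ hmem
      rcases hw' with h | h
      · exact absurd h hwD
      · exact h
  · -- the union is contained in the hull
    intro w hw
    simp only [qHull, Set.mem_sInter, Set.mem_setOf_eq]
    intro B hB
    obtain ⟨hBD, hBc, hBm⟩ := hB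
    rcases hw with hwD | hwH
    · exact hBD hwD
    · refine (Set.mem_sInter.mp hwH) B ?_
      exact ⟨Set.Subset.trans hsub hBD, hBc, hBm⟩
end
end
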